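/- arXiv:2302.12086 — 2 statements merged into one kernel-verified Lean document; each statement's English description precedes it below -/
import Mathlib

section
/- In an edge-to-edge rhombus tiling of ℝ², two distinct chains with the same normal vector v cannot cross: they share no common tile (otherwise the common tile would be a degenerate flat rhombus with both edge directions equal to v). -/
open Set Metric

set_option maxHeartbeats 1000000
noncomputable section

/-- Points of the euclidean plane. -/
abbrev Pt : Type := EuclideanSpace ℝ (Fin 2)

/-- A rhombus tile in the plane, given by a position (a distinguished vertex)
and its two edge vectors. -/
structure Rhombus where
  pos : Pt
  u : Pt
  v : Pt

namespace Rhombus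

/-- A genuine rhombus: linearly independent edge vectors of equal euclidean length. -/
def IsValid (r : Rhombus) : Prop :=
  LinearIndependent ℝ ![r.u, r.v] ∧ ‖r.u‖ = ‖r.v‖

/-- The support of a rhombus: the closed parallelogram it spans. -/
def support (r : Rhombus) : Set Pt :=
  {x | ∃ s t : ℝ, s ∈ Icc (0 : ℝ) 1 ∧ t ∈ Icc (0 : ℝ) 1 ∧ x = r.pos + s • r.u + t • r.v}

/-- The four vertices of a rhombus. -/
def vertices (r : Rhombus) : Set Pt :=
  {r.pos, r.pos + r.u, r.pos + r.v, r.pos + r.u + r.v}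

/-- The four (closed) edges of a rhombus, indexed as in the paper:
edge `0` from `pos` to `pos + u`, edge `1` from `pos + u` to `pos + u + v`,
edge `2` from `pos + u + v` to `pos + v`, edge `3` from `pos + v` to `pos`. -/
def edge (r : Rhombus) : Fin 4 → Set Pt :=
  ![segment ℝ r.pos (r.pos + r.u),
    segment ℝ (r.pos + r.u) (r.pos + r.u + r.v),
    segment ℝ (r.pos + r.u + r.v) (r.pos + r.v),
    segment ℝ (r.pos + r.v) r.pos]

/-- The set of edges of a rhombus. -/
def edges (r : Rhombus) : Set (Set Pt) := Set.range r.edge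

/-- Translation of a rhombus by a vector. -/
def translate (r : Rhombus) (w : Pt) : Rhombus := ⟨r.pos + w, r.u, r.v⟩

/-- The center of a rhombus. -/
def center (r : Rhombus) : Pt := r.pos + (2⁻¹ : ℝ) • r.u + (2⁻¹ : ℝ) • r.v

/-- Two rhombi are translates of each other (same shape up to translation). -/
def SameShape (r s : Rhombus) : Prop := r.u = s.u ∧ r.v = s.v

/-- `w` is one of the two edge directions of `r` (up to sign). -/
def HasEdgeDir (r : Rhombus) (w : Pt) : Prop :=
  r.u = w ∨ r.u = -w ∨ r.v = w ∨ r.v = -w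

end Rhombus

/-- Two rhombi are in edge-to-edge position: they are disjoint, share exactly one
common vertex, or share exactly one full common edge. -/
def EdgeToEdgePair (r s : Rhombus) : Prop :=
  r.support ∩ s.support = ∅ ∨
  (∃ p, p ∈ r.vertices ∧ p ∈ s.vertices ∧ r.support ∩ s.support = {p}) ∨
  (∃ e, e ∈ r.edges ∧ e ∈ s.edges ∧ r.support ∩ s.support = e)

/-- An edge-to-edge rhombus tiling of the plane: a covering of the plane
without overlap where any two tiles are disjoint, share exactly one vertex or
share a full common edge. -/
def IsTiling (x : Set Rhombus) : Prop :=
  (∀ r ∈ x, r.IsValid) ∧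
  (⋃ r ∈ x, r.support) = univ ∧
  ∀ r ∈ x, ∀ s ∈ x, r ≠ s → EdgeToEdgePair r s

/-- Every tile of `x` is a translate of a shape of the shapeset `T`. -/
def UsesShapes (T : Set Rhombus) (x : Set Rhombus) : Prop :=
  ∀ r ∈ x, ∃ s ∈ T, r.SameShape s

/-- An edge-to-edge tiling whose tiles are translates of shapes of `T`. -/
def IsTilingOn (T : Set Rhombus) (x : Set Rhombus) : Prop :=
  IsTiling x ∧ UsesShapes T x

/-- Support of a patch. -/
def PatchSupport (P : Set Rhombus) : Set Pt := ⋃ r ∈ P, r.support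

/-- A patch: a finite nonempty edge-to-edge set of rhombi whose support is
simply connected (no holes). -/
def IsPatch (P : Set Rhombus) : Prop :=
  P.Finite ∧ P.Nonempty ∧ (∀ r ∈ P, r.IsValid) ∧
  (∀ r ∈ P, ∀ s ∈ P, r ≠ s → EdgeToEdgePair r s) ∧
  SimplyConnectedSpace (PatchSupport P)

/-- Translation of a set of rhombi. -/
def translatePatch (P : Set Rhombus) (w : Pt) : Set Rhombus :=
  (fun r => r.translate w) '' P

/-- The pattern `f` appears in `x`: some translate of `f` is a sub-collection of `x`. -/
def Appears (f : Set Rhombus) (x : Set Rhombus) : Prop :=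
  ∃ w : Pt, translatePatch f w ⊆ x

/-- Vertices of a patch. -/
def PatchVertices (P : Set Rhombus) : Set Pt := ⋃ r ∈ P, r.vertices

/-- The support of `P` contains a disk of radius `ρ` centered at a vertex of `P`. -/
def HasRadius (P : Set Rhombus) (ρ : ℝ) : Prop :=
  ∃ c ∈ PatchVertices P, closedBall c ρ ⊆ PatchSupport P

/-- `P` has minimal radius `ρ`: its support contains a disk of radius `ρ` centered
at one of its vertices, and removing any tile breaks this property. -/
def MinimalRadius (P : Set Rhombus) (ρ : ℝ) : Prop :=
  HasRadius P ρ ∧ ∀ r ∈ P, ¬ HasRadius (P \ {r}) ρ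

/-- A rhombus Wang tile: a rhombus with a colour (a natural number) on each edge. -/
structure ColoredRhombus where
  shape : Rhombus
  color : Fin 4 → ℕ

namespace ColoredRhombus

def translate (t : ColoredRhombus) (w : Pt) : ColoredRhombus :=
  ⟨t.shape.translate w, t.color⟩

/-- Two coloured tiles are equal up to translation. -/
def SameTile (t s : ColoredRhombus) : Prop :=
  t.shape.SameShape s.shape ∧ t.color = s.color

end ColoredRhombus

/-- The colour-erasing operator `π`. -/
def eraseColors (x : Set ColoredRhombus) : Set Rhombus := ColoredRhombus.shape '' x

def translateColoredPatch (P : Set ColoredRhombus) (w : Pt) : Set ColoredRhombus :=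
  (fun t => t.translate w) '' P

/-- Any two tiles sharing an edge carry the same colour on the shared edge. -/
def ColorMatching (x : Set ColoredRhombus) : Prop :=
  ∀ t ∈ x, ∀ s ∈ x, t.shape ≠ s.shape →
    ∀ i j : Fin 4, t.shape.edge i = s.shape.edge j → t.color i = s.color j

/-- No two distinct coloured tiles occupy the same rhombus. -/
def ShapeInjective (x : Set ColoredRhombus) : Prop :=
  ∀ t ∈ x, ∀ s ∈ x, t.shape = s.shape → t = s

/-- A valid tiling by rhombus Wang tiles. -/
def IsColoredTiling (x : Set ColoredRhombus) : Prop :=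
  IsTiling (eraseColors x) ∧ ShapeInjective x ∧ ColorMatching x

/-- A valid patch of rhombus Wang tiles. -/
def IsColoredPatch (x : Set ColoredRhombus) : Prop :=
  IsPatch (eraseColors x) ∧ ShapeInjective x ∧ ColorMatching x

/-- All tiles of `x` are translates of tiles of the tileset `T`. -/
def TilesFrom (T : Set ColoredRhombus) (x : Set ColoredRhombus) : Prop :=
  ∀ t ∈ x, ∃ s ∈ T, t.SameTile s

/-- A subshift on the shapeset `T`: a set of `T`-tilings that is invariant under
translation and closed for the tiling topology (a tiling all of whose finite
patterns appear in tilings of `X` belongs to `X`). -/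
def IsSubshift (T : Set Rhombus) (X : Set (Set Rhombus)) : Prop :=
  (∀ x ∈ X, IsTilingOn T x) ∧
  (∀ x ∈ X, ∀ w : Pt, translatePatch x w ∈ X) ∧
  (∀ x, IsTilingOn T x →
    (∀ P, P ⊆ x → P.Finite → P.Nonempty → ∃ y ∈ X, Appears P y) → x ∈ X)

/-- The shape `r` is uniformly recurrent in the tiling `x`: for some `R > 0`,
every disk of radius `R` contains an occurrence (a translate) of `r`. -/
def UniformlyRecurrentIn (r : Rhombus) (x : Set Rhombus) : Prop :=
  ∃ R : ℝ, 0 < R ∧ ∀ p : Pt, ∃ s ∈ x, s.SameShape r ∧ s.support ⊆ closedBall p R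

/-- A shape uniformly recurrent subshift: every shape appearing somewhere in `X`
is uniformly recurrent in every tiling of `X`. -/
def ShapeUniformlyRecurrent (X : Set (Set Rhombus)) : Prop :=
  ∀ r : Rhombus, (∃ y ∈ X, ∃ s ∈ y, s.SameShape r) →
    ∀ x ∈ X, UniformlyRecurrentIn r x

/-- The restriction of `X` to the tilings using only shapes of `T'`. -/
def restrictShapes (T' : Set Rhombus) (X : Set (Set Rhombus)) : Set (Set Rhombus) :=
  {x ∈ X | UsesShapes T' x}

/-- The subshift on `T` defined by the sequence `F` of forbidden patterns. -/
def SubshiftOfForbidden (T : Set Rhombus) (F : ℕ → Set Rhombus) : Set (Set Rhombus) :=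
  {x | IsTilingOn T x ∧ ∀ n : ℕ, ¬ Appears (F n) x}

/-- A chain of rhombuses of normal vector `w` in the tiling `x`: a bi-infinite
sequence of tiles in which any two consecutive tiles share a full common edge of
direction `w`, the chain crossing each of its tiles from one of its two
`w`-edges to the other one. -/
structure Chain (x : Set Rhombus) (w : Pt) where
  seq : ℤ → Rhombus
  mem : ∀ n : ℤ, seq n ∈ x
  shares : ∀ n : ℤ, ∃ a : Pt,
    segment ℝ a (a + w) ∈ (seq n).edges ∧
    segment ℝ a (a + w) ∈ (seq (n + 1)).edges ∧
    (seq n).support ∩ (seq (n + 1)).support = segment ℝ a (a + w)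
  progress : ∀ n : ℤ,
    (seq (n - 1)).support ∩ (seq n).support ≠ (seq n).support ∩ (seq (n + 1)).support

/-- The set of tiles of a chain. -/
def Chain.tiles {x : Set Rhombus} {w : Pt} (c : Chain x w) : Set Rhombus :=
  Set.range c.seq

section Aux
open scoped RealInnerProductSpace

def Jv (w : Pt) : Pt := WithLp.toLp 2 ![-w 1, w 0]

lemma Jv_apply0 (w : Pt) : Jv w 0 = -w 1 := rfl
lemma Jv_apply1 (w : Pt) : Jv w 1 = w 0 := rfl

lemma inner_Jv_self (w : Pt) : ⟪Jv w, w⟫ = 0 := by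
  simp [PiLp.inner_apply, Fin.sum_univ_two, Jv_apply0, Jv_apply1, RCLike.inner_apply]
  ring

lemma Jv_ne_zero {w : Pt} (hw : w ≠ 0) : Jv w ≠ 0 := by
  intro h
  apply hw
  ext i
  fin_cases i
  · have := congrArg (fun z : Pt => z 1) h
    simpa [Jv] using this
  · have := congrArg (fun z : Pt => z 0) h
    simpa [Jv] using this

lemma norm_Jv (w : Pt) : ‖Jv w‖ = ‖w‖ := by
  rw [EuclideanSpace.norm_eq, EuclideanSpace.norm_eq]
  congr 1
  simp [Fin.sum_univ_two, Jv_apply0, Jv_apply1]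
  ring

-- decomposition of the plane along w and Jv w
lemma decomp {w : Pt} (hw : w ≠ 0) (x : Pt) :
    ∃ s t : ℝ, x = s • w + t • Jv w := by
  have hw' : ‖w‖ ≠ 0 := norm_ne_zero_iff.2 hw
  have hD : ‖w‖ ^ 2 ≠ 0 := pow_ne_zero _ hw'
  refine ⟨⟪w, x⟫ / ‖w‖ ^ 2, ⟪Jv w, x⟫ / ‖w‖ ^ 2, ?_⟩
  have hn : (‖w‖:ℝ) ^ 2 = w 0 ^ 2 + w 1 ^ 2 := by
    rw [EuclideanSpace.norm_eq]
    rw [Real.sq_sqrt (by positivity)]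
    simp [Fin.sum_univ_two]
  ext i
  fin_cases i <;>
  · simp only [PiLp.smul_apply, PiLp.add_apply, smul_eq_mul, PiLp.inner_apply,
      RCLike.inner_apply, conj_trivial, Fin.sum_univ_two, Jv, Fin.zero_eta, Fin.mk_one, Matrix.cons_val_zero, Matrix.cons_val_one, Matrix.head_cons]
    rw [hn]
    have h2 : w 0 ^ 2 + w 1 ^ 2 ≠ 0 := by rw [← hn]; exact hD
    field_simp
    ring


def oneV : Pt := WithLp.toLp 2 ![1, 0]

lemma oneV_ne_zero : oneV ≠ 0 := by
  intro h
  have := congrArg (fun z : Pt => z 0) h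
  simp [oneV] at this

lemma interior_empty_of_inner {c : Pt} (hc : c ≠ 0) (d : ℝ) {S : Set Pt}
    (hS : S ⊆ {x | ⟪c, x⟫ = d}) : interior S = ∅ := by
  by_contra hne
  obtain ⟨q, hq⟩ := Set.nonempty_iff_ne_empty.2 hne
  obtain ⟨δ, hδ, hball⟩ := Metric.isOpen_iff.1 isOpen_interior q hq
  have hcn : (0:ℝ) < ‖c‖ := norm_pos_iff.2 hc
  set q' : Pt := q + (δ / (2 * ‖c‖)) • c with hq'
  have hmem : q' ∈ S := by
    apply interior_subset
    apply hball
    rw [Metric.mem_ball, dist_eq_norm]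
    have : q' - q = (δ / (2 * ‖c‖)) • c := by rw [hq']; abel
    rw [this, norm_smul]
    rw [Real.norm_eq_abs, abs_of_pos (by positivity)]
    have h3 : δ / (2 * ‖c‖) * ‖c‖ = δ / 2 := by field_simp
    rw [h3]; linarith
  have h1 : ⟪c, q'⟫ = d := hS hmem
  have h2 : ⟪c, q⟫ = d := hS (interior_subset hq)
  rw [hq', inner_add_right, real_inner_smul_right, h2, real_inner_self_eq_norm_sq] at h1
  have : δ / (2 * ‖c‖) * ‖c‖ ^ 2 > 0 := by positivity
  linarith

lemma interior_segment_empty (p₁ p₂ : Pt) : interior (segment ℝ p₁ p₂) = ∅ := by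
  by_cases hw : p₂ - p₁ = 0
  · have hp : p₂ = p₁ := by rwa [sub_eq_zero] at hw
    subst hp
    rw [segment_same]
    apply interior_empty_of_inner oneV_ne_zero ⟪oneV, p₂⟫
    rintro x rfl; rfl
  · apply interior_empty_of_inner (Jv_ne_zero hw) ⟪Jv (p₂ - p₁), p₁⟫
    rintro x ⟨a, b, ha, hb, hab, rfl⟩
    show ⟪Jv (p₂ - p₁), a • p₁ + b • p₂⟫ = _
    rw [inner_add_right, real_inner_smul_right, real_inner_smul_right]
    have h2 : ⟪Jv (p₂ - p₁), p₂⟫ = ⟪Jv (p₂ - p₁), p₁⟫ := by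
      have := inner_Jv_self (p₂ - p₁)
      rw [inner_sub_right] at this
      linarith
    rw [h2, ← add_mul, hab, one_mul]

lemma support_convex (r : Rhombus) : Convex ℝ r.support := by
  rintro x ⟨s, t, hs, ht, rfl⟩ y ⟨s', t', hs', ht', rfl⟩ a b ha hb hab
  refine ⟨a * s + b * s', a * t + b * t', ⟨?_, ?_⟩, ⟨?_, ?_⟩, ?_⟩
  · nlinarith [hs.1, hs'.1]
  · nlinarith [hs.2, hs'.2]
  · nlinarith [ht.1, ht'.1]
  · nlinarith [ht.2, ht'.2]
  · have hb' : b = 1 - a := by linarith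
    subst hb'
    module

lemma mem_support_pos (r : Rhombus) : r.pos ∈ r.support :=
  ⟨0, 0, ⟨le_refl _, zero_le_one⟩, ⟨le_refl _, zero_le_one⟩, by module⟩

lemma mem_support_pos_add_u (r : Rhombus) : r.pos + r.u ∈ r.support :=
  ⟨1, 0, ⟨zero_le_one, le_refl _⟩, ⟨le_refl _, zero_le_one⟩, by module⟩

lemma mem_support_pos_add_v (r : Rhombus) : r.pos + r.v ∈ r.support :=
  ⟨0, 1, ⟨le_refl _, zero_le_one⟩, ⟨zero_le_one, le_refl _⟩, by module⟩

lemma support_interior_nonempty (r : Rhombus) (hr : r.IsValid) :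
    (interior r.support).Nonempty := by
  rw [(support_convex r).interior_nonempty_iff_affineSpan_eq_top]
  have hsne : r.support.Nonempty := ⟨r.pos, mem_support_pos r⟩
  rw [AffineSubspace.affineSpan_eq_top_iff_vectorSpan_eq_top_of_nonempty ℝ Pt Pt hsne]
  have hspan : Submodule.span ℝ (Set.range ![r.u, r.v]) = ⊤ :=
    hr.1.span_eq_top_of_card_eq_finrank (by simp)
  rw [eq_top_iff, ← hspan, Submodule.span_le]
  rintro w ⟨i, rfl⟩
  fin_cases i
  · have := vsub_mem_vectorSpan ℝ (mem_support_pos_add_u r) (mem_support_pos r)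
    simpa using this
  · have := vsub_mem_vectorSpan ℝ (mem_support_pos_add_v r) (mem_support_pos r)
    simpa using this

end Aux

section Aux2
open scoped RealInnerProductSpace

lemma segment_eq_endpoints {x y x' y' : Pt} (h : segment ℝ x y = segment ℝ x' y') :
    (x' = x ∧ y' = y) ∨ (x' = y ∧ y' = x) := by
  by_cases hxy : x = y
  · subst hxy
    rw [segment_same] at h
    have h1 : x' ∈ ({x} : Set Pt) := h ▸ left_mem_segment ℝ x' y'
    have h2 : y' ∈ ({x} : Set Pt) := h ▸ right_mem_segment ℝ x' y'
    simp only [Set.mem_singleton_iff] at h1 h2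
    exact Or.inl ⟨h1, h2⟩
  · have hw : y - x ≠ 0 := sub_ne_zero.2 (Ne.symm hxy)
    have hx' : x' ∈ segment ℝ x y := h ▸ left_mem_segment ℝ x' y'
    have hy' : y' ∈ segment ℝ x y := h ▸ right_mem_segment ℝ x' y'
    rw [segment_eq_image'] at hx' hy'
    obtain ⟨t, ht, hx'⟩ := hx'
    obtain ⟨s, hs, hy'⟩ := hy'
    have hxm : x ∈ segment ℝ x' y' := h ▸ left_mem_segment ℝ x y
    have hym : y ∈ segment ℝ x' y' := h ▸ right_mem_segment ℝ x y
    obtain ⟨c, d, hc, hd, hcd, hcomb⟩ := hxm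
    obtain ⟨c', d', hc', hd', hcd', hcomb'⟩ := hym
    have hd1 : d = 1 - c := by linarith
    have hd1' : d' = 1 - c' := by linarith
    subst hd1 hd1'
    rw [← hx', ← hy'] at hcomb hcomb'
    have h0 : (c * t + (1 - c) * s) • (y - x) = 0 := by
      linear_combination (norm := module) hcomb
    have h1 : (c' * t + (1 - c') * s - 1) • (y - x) = 0 := by
      linear_combination (norm := module) hcomb'
    rw [smul_eq_zero] at h0 h1
    have e0 : c * t + (1 - c) * s = 0 := h0.resolve_right hw
    have e1 : c' * t + (1 - c') * s = 1 := by
      rcases h1 with h1 | h1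
      · linarith
      · exact absurd h1 hw
    by_cases ht0 : t = 0
    · subst ht0
      have hs1 : s = 1 := by nlinarith [ht.1, ht.2, hs.1, hs.2]
      subst hs1
      refine Or.inl ⟨by rw [← hx']; module, by rw [← hy']; module⟩
    · have hc0 : c = 0 := by
        rcases mul_eq_zero.1 (by nlinarith [ht.1, hs.1] : c * t = 0) with h | h
        · exact h
        · exact absurd h ht0
      subst hc0
      have hs0 : s = 0 := by nlinarith [hs.1]
      subst hs0
      have ht1 : t = 1 := by nlinarith [ht.1, ht.2, hc', hd']
      subst ht1
      refine Or.inr ⟨by rw [← hx']; module, by rw [← hy']; module⟩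

lemma seg_dir {a v p w : Pt} (h : segment ℝ a (a + v) = segment ℝ p (p + w)) :
    v = w ∨ v = -w := by
  rcases segment_eq_endpoints h.symm with ⟨h1, h2⟩ | ⟨h1, h2⟩
  · left
    rw [← h1] at h2
    exact add_left_cancel h2
  · right
    rw [h1] at h2
    have h3 : w + v = 0 := by linear_combination (norm := module) h2
    exact eq_neg_of_add_eq_zero_right h3

lemma edge0_eq (r : Rhombus) : r.edge 0 = segment ℝ r.pos (r.pos + r.u) := rfl
lemma edge1_eq (r : Rhombus) : r.edge 1 = segment ℝ (r.pos + r.u) (r.pos + r.u + r.v) := rfl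
lemma edge2_eq (r : Rhombus) : r.edge 2 = segment ℝ (r.pos + r.u + r.v) (r.pos + r.v) := rfl
lemma edge3_eq (r : Rhombus) : r.edge 3 = segment ℝ (r.pos + r.v) r.pos := rfl

lemma edge_is_segment (r : Rhombus) (i : Fin 4) : ∃ p q : Pt, r.edge i = segment ℝ p q := by
  fin_cases i
  · exact ⟨_, _, edge0_eq r⟩
  · exact ⟨_, _, edge1_eq r⟩
  · exact ⟨_, _, edge2_eq r⟩
  · exact ⟨_, _, edge3_eq r⟩

lemma dir_of_edge {r : Rhombus} {E : Set Pt} (hE : E ∈ r.edges) {a v : Pt}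
    (hseg : E = segment ℝ a (a + v)) :
    ((v = r.u ∨ v = -r.u) ∧ (E = r.edge 0 ∨ E = r.edge 2)) ∨
    ((v = r.v ∨ v = -r.v) ∧ (E = r.edge 1 ∨ E = r.edge 3)) := by
  obtain ⟨i, hi⟩ := hE
  fin_cases i
  · refine Or.inl ⟨?_, Or.inl hi.symm⟩
    have h : segment ℝ a (a + v) = segment ℝ r.pos (r.pos + r.u) := by
      rw [← hseg, ← hi]; exact edge0_eq r
    exact seg_dir h
  · refine Or.inr ⟨?_, Or.inl hi.symm⟩
    have h : segment ℝ a (a + v) = segment ℝ (r.pos + r.u) ((r.pos + r.u) + r.v) := by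
      rw [← hseg, ← hi]; exact edge1_eq r
    exact seg_dir h
  · refine Or.inl ⟨?_, Or.inr hi.symm⟩
    have h : segment ℝ a (a + v) = segment ℝ (r.pos + r.u + r.v) ((r.pos + r.u + r.v) + (-r.u)) := by
      rw [← hseg, ← hi]
      rw [show (r.pos + r.u + r.v) + (-r.u) = r.pos + r.v from by module]
      exact edge2_eq r
    rcases seg_dir h with h' | h'
    · exact Or.inr h'
    · rw [neg_neg] at h'; exact Or.inl h'
  · refine Or.inr ⟨?_, Or.inr hi.symm⟩
    have h : segment ℝ a (a + v) = segment ℝ (r.pos + r.v) ((r.pos + r.v) + (-r.v)) := by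
      rw [← hseg, ← hi]
      rw [show (r.pos + r.v) + (-r.v) = r.pos from by module]
      exact edge3_eq r
    rcases seg_dir h with h' | h'
    · exact Or.inr h'
    · rw [neg_neg] at h'; exact Or.inl h'

lemma not_both_dirs {r : Rhombus} (hr : r.IsValid) {v : Pt}
    (h1 : v = r.u ∨ v = -r.u) (h2 : v = r.v ∨ v = -r.v) : False := by
  have hp := LinearIndependent.pair_iff.1 hr.1
  rcases h1 with h1 | h1 <;> rcases h2 with h2 | h2
  · have huv : r.u = r.v := by rw [← h1, ← h2]
    exact one_ne_zero ((hp 1 (-1) (by rw [huv]; module)).1)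
  · have huv : r.u = -r.v := by rw [← h1, h2]
    exact one_ne_zero ((hp 1 1 (by rw [huv]; module)).1)
  · have huv : r.v = -r.u := by rw [← h2, h1]
    exact one_ne_zero ((hp 1 1 (by rw [huv]; module)).1)
  · have huv : r.u = r.v := by
      have := h1.symm.trans h2
      exact neg_injective this
    exact one_ne_zero ((hp 1 (-1) (by rw [huv]; module)).1)

lemma edge0_ne_edge2 {r : Rhombus} (hr : r.IsValid) : r.edge 0 ≠ r.edge 2 := by
  intro h
  have hp := LinearIndependent.pair_iff.1 hr.1
  have hm : r.pos ∈ r.edge 0 := by rw [edge0_eq]; exact left_mem_segment ℝ _ _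
  rw [h, edge2_eq] at hm
  obtain ⟨c, d, hc, hd, hcd, hcomb⟩ := hm
  have hd1 : d = 1 - c := by linarith
  subst hd1
  have h0 : c • r.u + (1 : ℝ) • r.v = 0 := by linear_combination (norm := module) hcomb
  exact one_ne_zero ((hp c 1 h0).2)

lemma edge1_ne_edge3 {r : Rhombus} (hr : r.IsValid) : r.edge 1 ≠ r.edge 3 := by
  intro h
  have hp := LinearIndependent.pair_iff.1 hr.1
  have hm : r.pos + r.u ∈ r.edge 1 := by rw [edge1_eq]; exact left_mem_segment ℝ _ _
  rw [h, edge3_eq] at hm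
  obtain ⟨c, d, hc, hd, hcd, hcomb⟩ := hm
  have hd1 : d = 1 - c := by linarith
  subst hd1
  have h0 : (-1 : ℝ) • r.u + c • r.v = 0 := by linear_combination (norm := module) hcomb
  have := (hp (-1) c h0).1
  norm_num at this

lemma at_most_two {r : Rhombus} (hr : r.IsValid) {v : Pt} {E₁ E₂ E₃ : Set Pt}
    (h₁ : E₁ ∈ r.edges) (h₂ : E₂ ∈ r.edges) (h₃ : E₃ ∈ r.edges)
    {a₁ a₂ a₃ : Pt} (e₁ : E₁ = segment ℝ a₁ (a₁ + v)) (e₂ : E₂ = segment ℝ a₂ (a₂ + v))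
    (e₃ : E₃ = segment ℝ a₃ (a₃ + v)) (n₂ : E₂ ≠ E₁) (n₃ : E₃ ≠ E₁) : E₂ = E₃ := by
  have d₁ := dir_of_edge h₁ e₁
  have d₂ := dir_of_edge h₂ e₂
  have d₃ := dir_of_edge h₃ e₃
  rcases d₁ with ⟨hv₁, hE₁⟩ | ⟨hv₁, hE₁⟩
  · have hE₂ : E₂ = r.edge 0 ∨ E₂ = r.edge 2 := by
      rcases d₂ with ⟨_, h⟩ | ⟨hv₂, _⟩
      · exact h
      · exact absurd (not_both_dirs hr hv₁ hv₂) not_false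
    have hE₃ : E₃ = r.edge 0 ∨ E₃ = r.edge 2 := by
      rcases d₃ with ⟨_, h⟩ | ⟨hv₃, _⟩
      · exact h
      · exact absurd (not_both_dirs hr hv₁ hv₃) not_false
    rcases hE₁ with h | h <;> rcases hE₂ with h2 | h2 <;> rcases hE₃ with h3 | h3 <;>
      first
        | exact h2.trans h3.symm
        | exact absurd (h2.trans h.symm) n₂
        | exact absurd (h3.trans h.symm) n₃
  · have hE₂ : E₂ = r.edge 1 ∨ E₂ = r.edge 3 := by
      rcases d₂ with ⟨hv₂, _⟩ | ⟨_, h⟩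
      · exact absurd (not_both_dirs hr hv₂ hv₁) not_false
      · exact h
    have hE₃ : E₃ = r.edge 1 ∨ E₃ = r.edge 3 := by
      rcases d₃ with ⟨hv₃, _⟩ | ⟨_, h⟩
      · exact absurd (not_both_dirs hr hv₃ hv₁) not_false
      · exact h
    rcases hE₁ with h | h <;> rcases hE₂ with h2 | h2 <;> rcases hE₃ with h3 | h3 <;>
      first
        | exact h2.trans h3.symm
        | exact absurd (h2.trans h.symm) n₂
        | exact absurd (h3.trans h.symm) n₃

lemma seg_edge_v_ne_zero {r : Rhombus} (hr : r.IsValid) {a v : Pt}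
    (hE : segment ℝ a (a + v) ∈ r.edges) : v ≠ 0 := by
  have hu : r.u ≠ 0 := by
    have := hr.1.ne_zero 0
    simpa using this
  have hv : r.v ≠ 0 := by
    have := hr.1.ne_zero 1
    simpa using this
  rcases dir_of_edge hE rfl with ⟨h, _⟩ | ⟨h, _⟩
  · rcases h with rfl | rfl
    · exact hu
    · exact neg_ne_zero.2 hu
  · rcases h with rfl | rfl
    · exact hv
    · exact neg_ne_zero.2 hv

lemma interiors_disjoint {x : Set Rhombus} (hx : IsTiling x) {r s : Rhombus}
    (hr : r ∈ x) (hs : s ∈ x) (hne : r ≠ s) :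
    interior r.support ∩ interior s.support = ∅ := by
  rw [← interior_inter]
  rcases hx.2.2 r hr s hs hne with h | ⟨p, _, _, h⟩ | ⟨e, he, _, h⟩
  · rw [h]; exact interior_empty
  · rw [h, ← segment_same ℝ (x := p)]
    exact interior_segment_empty _ _
  · rw [h]
    obtain ⟨i, hi⟩ := he
    obtain ⟨p, q, hpq⟩ := edge_is_segment r i
    rw [← hi, hpq]
    exact interior_segment_empty _ _

lemma side_lemma {S : Set Pt} (hS : Convex ℝ S) (a w n q : Pt)
    (hsub : ∀ lam : ℝ, lam ∈ Icc (0:ℝ) 1 → a + lam • w ∈ S)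
    (hq : q ∈ interior S) (al be : ℝ) (hdec : q = a + al • w + be • n) :
    ∃ tau > (0:ℝ), ∀ eta : ℝ, 0 < eta / be → eta / be < tau →
      a + (2⁻¹ : ℝ) • w + eta • n ∈ interior S := by
  refine ⟨min (1/8) (1/(8*(|al|+1))), by positivity, ?_⟩
  intro eta h1 h2
  have hbe : be ≠ 0 := by
    rintro rfl
    rw [div_zero] at h1
    exact absurd h1 (lt_irrefl 0)
  set t := eta / be with htdef
  have ht0 : 0 < t := h1
  have hal : (0:ℝ) < |al| + 1 := by positivity
  have ht8 : t ≤ 1/8 := le_of_lt (lt_of_lt_of_le h2 (min_le_left _ _))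
  have htal : t * |al| ≤ 1/8 := by
    have h3 : t < 1/(8*(|al|+1)) := lt_of_lt_of_le h2 (min_le_right _ _)
    have h4 : t * (8*(|al| + 1)) < 1 :=
      (lt_div_iff₀ (by positivity : (0:ℝ) < 8*(|al|+1))).1 h3
    nlinarith [abs_nonneg al]
  have h1t : (0:ℝ) < 1 - t := by linarith
  set lam := (2⁻¹ - t * al) / (1 - t) with hlamdef
  have habs1 : t * al ≤ 1/8 := le_trans (by nlinarith [le_abs_self al, ht0.le]) htal
  have habs2 : -(1/8 : ℝ) ≤ t * al := by nlinarith [neg_abs_le al, ht0.le]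
  have hlam : lam ∈ Icc (0:ℝ) 1 := by
    constructor
    · apply div_nonneg _ h1t.le
      linarith
    · rw [div_le_one h1t]
      linarith
  have hmem := hS.combo_interior_closure_mem_interior hq
    (subset_closure (hsub lam hlam)) ht0 h1t.le (by ring)
  have heq : t • q + (1 - t) • (a + lam • w) = a + (2⁻¹ : ℝ) • w + eta • n := by
    rw [hdec]
    have heta : eta = t * be := by
      rw [htdef]; field_simp
    rw [heta]
    have hlw : (1 - t) * lam = 2⁻¹ - t * al := by
      rw [hlamdef]; field_simp
    match_scalars
    · ring
    · nlinarith [hlw]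
    · ring
  rwa [heq] at hmem

lemma exists_interior_off {U : Set Pt} (hU : IsOpen U) (hne : U.Nonempty)
    (a : Pt) {w : Pt} (hw : w ≠ 0) : ∃ q ∈ U, ⟪Jv w, q - a⟫ ≠ 0 := by
  obtain ⟨q₀, hq₀⟩ := hne
  by_cases h0 : ⟪Jv w, q₀ - a⟫ ≠ 0
  · exact ⟨q₀, hq₀, h0⟩
  push_neg at h0
  obtain ⟨δ, hδ, hball⟩ := Metric.isOpen_iff.1 hU q₀ hq₀
  have hwn : (0:ℝ) < ‖w‖ := norm_pos_iff.2 hw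
  refine ⟨q₀ + (δ / (2 * ‖w‖)) • Jv w, ?_, ?_⟩
  · apply hball
    rw [Metric.mem_ball, dist_eq_norm]
    have h1 : q₀ + (δ / (2 * ‖w‖)) • Jv w - q₀ = (δ / (2 * ‖w‖)) • Jv w := by abel
    rw [h1, norm_smul, Real.norm_eq_abs, abs_of_pos (by positivity), norm_Jv]
    have : δ / (2 * ‖w‖) * ‖w‖ = δ / 2 := by field_simp
    rw [this]; linarith
  · have h1 : q₀ + (δ / (2 * ‖w‖)) • Jv w - a = (q₀ - a) + (δ / (2 * ‖w‖)) • Jv w := by abel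
    rw [h1, inner_add_right, real_inner_smul_right, h0, real_inner_self_eq_norm_sq, norm_Jv]
    have : δ / (2 * ‖w‖) * ‖w‖ ^ 2 > 0 := by positivity
    linarith

lemma no_same_side {S S' : Set Pt} (hS : Convex ℝ S) (hS' : Convex ℝ S')
    (a w n : Pt)
    (hsub : ∀ lam : ℝ, lam ∈ Icc (0:ℝ) 1 → a + lam • w ∈ S)
    (hsub' : ∀ lam : ℝ, lam ∈ Icc (0:ℝ) 1 → a + lam • w ∈ S')
    {q q' : Pt} (hq : q ∈ interior S) (hq' : q' ∈ interior S')
    {al al' be be' : ℝ} (hdec : q = a + al • w + be • n) (hdec' : q' = a + al' • w + be' • n)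
    (hsame : 0 < be * be') (hdisj : interior S ∩ interior S' = ∅) : False := by
  obtain ⟨tau, htau, hmem⟩ := side_lemma hS a w n q hsub hq al be hdec
  obtain ⟨tau', htau', hmem'⟩ := side_lemma hS' a w n q' hsub' hq' al' be' hdec'
  have hbe : be ≠ 0 := by rintro rfl; simp at hsame
  have hbe' : be' ≠ 0 := by rintro rfl; simp at hsame
  have hrho : 0 < be / be' := div_pos_iff.2 (mul_pos_iff.1 hsame)
  set rho := be / be' with hrhodef
  set t := min tau (tau' / rho) / 2 with htdef
  have ht0 : 0 < t := by
    apply div_pos _ (by norm_num : (0:ℝ) < 2)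
    exact lt_min htau (div_pos htau' hrho)
  set eta := t * be with hetadef
  have he1 : eta / be = t := by field_simp; rw [hetadef]; ring
  have he2 : eta / be' = t * rho := by rw [hrhodef]; field_simp; try ring
  have hp1 : a + (2⁻¹:ℝ) • w + eta • n ∈ interior S := by
    apply hmem
    · rw [he1]; exact ht0
    · rw [he1, htdef]
      have : min tau (tau' / rho) ≤ tau := min_le_left _ _
      linarith
  have hp2 : a + (2⁻¹:ℝ) • w + eta • n ∈ interior S' := by
    apply hmem'
    · rw [he2]; positivity
    · rw [he2]
      have h5 : min tau (tau' / rho) ≤ tau' / rho := min_le_right _ _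
      have h6 : min tau (tau' / rho) * rho ≤ tau' := (le_div_iff₀ hrho).1 h5
      have h7 : t * rho = min tau (tau' / rho) * rho / 2 := by rw [htdef]; ring
      linarith
  exact absurd hdisj (by rw [Set.eq_empty_iff_forall_notMem]; push_neg; exact ⟨_, hp1, hp2⟩)

lemma three_convex {A B C : Set Pt} (hA : Convex ℝ A) (hB : Convex ℝ B) (hC : Convex ℝ C)
    (hiA : (interior A).Nonempty) (hiB : (interior B).Nonempty) (hiC : (interior C).Nonempty)
    {a b : Pt} (hab : a ≠ b)
    (hsA : segment ℝ a b ⊆ A) (hsB : segment ℝ a b ⊆ B) (hsC : segment ℝ a b ⊆ C)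
    (hAB : interior A ∩ interior B = ∅) (hAC : interior A ∩ interior C = ∅)
    (hBC : interior B ∩ interior C = ∅) : False := by
  set w := b - a with hwdef
  have hw : w ≠ 0 := sub_ne_zero.2 (Ne.symm hab)
  have hJJ : ⟪Jv w, w⟫ = 0 := inner_Jv_self w
  have key : ∀ S : Set Pt, Convex ℝ S → (interior S).Nonempty → segment ℝ a b ⊆ S →
      ∃ q ∈ interior S, ∃ al be : ℝ, be ≠ 0 ∧ q = a + al • w + be • Jv w := by
    intro S hS hiS hsS
    obtain ⟨q, hq, hq0⟩ := exists_interior_off isOpen_interior hiS a hw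
    obtain ⟨al, be, hqd⟩ := decomp hw (q - a)
    have hin : ⟪Jv w, q - a⟫ = be * ‖w‖ ^ 2 := by
      rw [hqd, inner_add_right, real_inner_smul_right, real_inner_smul_right, hJJ,
        real_inner_self_eq_norm_sq, norm_Jv]
      ring
    have hbe : be ≠ 0 := by
      intro h
      rw [h, zero_mul] at hin
      exact hq0 hin
    exact ⟨q, hq, al, be, hbe, by linear_combination (norm := module) hqd⟩
  have hsubgen : ∀ (S : Set Pt), segment ℝ a b ⊆ S →
      ∀ lam : ℝ, lam ∈ Icc (0:ℝ) 1 → a + lam • w ∈ S := by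
    intro S hsS lam hlam
    exact hsS ⟨1 - lam, lam, by linarith [hlam.2], hlam.1, by ring, by rw [hwdef]; module⟩
  obtain ⟨qA, hqA, alA, beA, hbeA, hdA⟩ := key A hA hiA hsA
  obtain ⟨qB, hqB, alB, beB, hbeB, hdB⟩ := key B hB hiB hsB
  obtain ⟨qC, hqC, alC, beC, hbeC, hdC⟩ := key C hC hiC hsC
  by_cases h1 : 0 < beA * beB
  · exact no_same_side hA hB a w (Jv w) (hsubgen A hsA) (hsubgen B hsB) hqA hqB hdA hdB h1 hAB
  by_cases h2 : 0 < beA * beC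
  · exact no_same_side hA hC a w (Jv w) (hsubgen A hsA) (hsubgen C hsC) hqA hqC hdA hdC h2 hAC
  push_neg at h1 h2
  have n1 : beA * beB < 0 := lt_of_le_of_ne h1 (mul_ne_zero hbeA hbeB)
  have n2 : beA * beC < 0 := lt_of_le_of_ne h2 (mul_ne_zero hbeA hbeC)
  have h3 : 0 < beB * beC := by
    nlinarith [mul_pos_of_neg_of_neg n1 n2, mul_self_pos.2 hbeA]
  exact no_same_side hB hC a w (Jv w) (hsubgen B hsB) (hsubgen C hsC) hqB hqC hdB hdC h3 hBC

lemma unique_neighbor {x : Set Rhombus} (hx : IsTiling x) {r s s' : Rhombus}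
    (hr : r ∈ x) (hs : s ∈ x) (hs' : s' ∈ x) (hrs : r ≠ s) (hrs' : r ≠ s')
    {a b : Pt} (hab : a ≠ b)
    (h1 : r.support ∩ s.support = segment ℝ a b)
    (h2 : r.support ∩ s'.support = segment ℝ a b) : s = s' := by
  by_contra hss'
  refine three_convex (support_convex r) (support_convex s) (support_convex s')
    (support_interior_nonempty r (hx.1 r hr)) (support_interior_nonempty s (hx.1 s hs))
    (support_interior_nonempty s' (hx.1 s' hs')) hab ?_ ?_ ?_
    (interiors_disjoint hx hr hs hrs) (interiors_disjoint hx hr hs' hrs')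
    (interiors_disjoint hx hs hs' hss')
  · rw [← h1]; exact inter_subset_left
  · rw [← h1]; exact inter_subset_right
  · rw [← h2]; exact inter_subset_right

end Aux2

section ChainAux

variable {x : Set Rhombus} {v : Pt}

def fEdge (c : Chain x v) (n : ℤ) : Set Pt :=
  (c.seq n).support ∩ (c.seq (n + 1)).support

lemma fEdge_spec (c : Chain x v) (n : ℤ) : ∃ a : Pt,
    fEdge c n = segment ℝ a (a + v) ∧ segment ℝ a (a + v) ∈ (c.seq n).edges ∧
    segment ℝ a (a + v) ∈ (c.seq (n + 1)).edges := by
  obtain ⟨a, h1, h2, h3⟩ := c.shares n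
  exact ⟨a, h3, h1, h2⟩

lemma fEdge_ne (c : Chain x v) (n : ℤ) : fEdge c n ≠ fEdge c (n + 1) := by
  have h := c.progress (n + 1)
  rw [show n + 1 - 1 = n from by ring] at h
  exact h

lemma consecutive_ne (hx : IsTiling x) (c : Chain x v) (n : ℤ) :
    c.seq n ≠ c.seq (n + 1) := by
  intro he
  obtain ⟨a, h3, h1, h2⟩ := fEdge_spec c n
  have hval := hx.1 _ (c.mem n)
  have hs : (c.seq n).support = segment ℝ a (a + v) := by
    have h4 : (c.seq n).support ∩ (c.seq (n+1)).support = segment ℝ a (a + v) := h3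
    rw [← he, Set.inter_self] at h4
    exact h4
  have hne0 := support_interior_nonempty _ hval
  rw [hs, interior_segment_empty] at hne0
  exact Set.not_nonempty_empty hne0

lemma step (hx : IsTiling x) (c₁ c₂ : Chain x v) (n₁ n₂ : ℤ)
    (ht : c₁.seq n₁ = c₂.seq n₂) (he : fEdge c₁ n₁ = fEdge c₂ n₂) :
    c₁.seq (n₁ + 1) = c₂.seq (n₂ + 1) ∧ fEdge c₁ (n₁ + 1) = fEdge c₂ (n₂ + 1) := by
  obtain ⟨a, hE1, hEe1, hEe1'⟩ := fEdge_spec c₁ n₁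
  obtain ⟨a', hE2, hEe2, hEe2'⟩ := fEdge_spec c₂ n₂
  have hvne : v ≠ 0 := seg_edge_v_ne_zero (hx.1 _ (c₁.mem n₁)) hEe1
  have hane : a ≠ a + v := by
    intro hh
    exact hvne (left_eq_add.1 hh)
  have h1 : (c₁.seq n₁).support ∩ (c₁.seq (n₁+1)).support = segment ℝ a (a + v) := hE1
  have h2 : (c₁.seq n₁).support ∩ (c₂.seq (n₂+1)).support = segment ℝ a (a + v) := by
    rw [ht]
    have h4 : (c₂.seq n₂).support ∩ (c₂.seq (n₂+1)).support = fEdge c₂ n₂ := rfl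
    rw [h4, ← he]
    exact hE1
  have hnext : c₁.seq (n₁ + 1) = c₂.seq (n₂ + 1) :=
    unique_neighbor hx (c₁.mem n₁) (c₁.mem (n₁+1)) (c₂.mem (n₂+1))
      (consecutive_ne hx c₁ n₁) (by rw [ht]; exact consecutive_ne hx c₂ n₂) hane h1 h2
  refine ⟨hnext, ?_⟩
  obtain ⟨b, hF1, hFe1, hFe1'⟩ := fEdge_spec c₁ (n₁ + 1)
  obtain ⟨b', hF2, hFe2, hFe2'⟩ := fEdge_spec c₂ (n₂ + 1)
  rw [← hnext] at hFe2
  have hFne : segment ℝ b (b + v) ≠ segment ℝ a (a + v) := by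
    rw [← hE1, ← hF1]
    exact (fEdge_ne c₁ n₁).symm
  have hGne : segment ℝ b' (b' + v) ≠ segment ℝ a (a + v) := by
    rw [← hF2, ← hE1, he]
    exact (fEdge_ne c₂ n₂).symm
  have hseg := at_most_two (hx.1 _ (c₁.mem (n₁+1))) hEe1' hFe1 hFe2 rfl rfl rfl hFne hGne
  rw [hF1, hF2, hseg]

def Chain.rev (c : Chain x v) : Chain x v where
  seq n := c.seq (-n)
  mem n := c.mem (-n)
  shares n := by
    obtain ⟨a, h1, h2, h3⟩ := c.shares (-n - 1)
    rw [show -n - 1 + 1 = -n from by ring] at h2 h3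
    refine ⟨a, h2, ?_, ?_⟩
    · show _ ∈ (c.seq (-(n+1))).edges
      rw [show -(n+1) = -n - 1 from by ring]
      exact h1
    · show (c.seq (-n)).support ∩ (c.seq (-(n+1))).support = _
      rw [show -(n+1) = -n - 1 from by ring, Set.inter_comm]
      exact h3
  progress n := by
    have h := c.progress (-n)
    show (c.seq (-(n-1))).support ∩ (c.seq (-n)).support ≠
      (c.seq (-n)).support ∩ (c.seq (-(n+1))).support
    rw [show -(n-1) = -n + 1 from by ring, show -(n+1) = -n - 1 from by ring]
    intro heq
    apply h
    rw [Set.inter_comm] at heq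
    rw [Set.inter_comm ((c.seq (-n - 1)).support)]
    exact heq.symm

lemma rev_seq (c : Chain x v) (n : ℤ) : c.rev.seq n = c.seq (-n) := rfl

lemma rev_tiles (c : Chain x v) : c.rev.tiles = c.tiles := by
  ext r
  constructor
  · rintro ⟨n, rfl⟩
    exact ⟨-n, rfl⟩
  · rintro ⟨n, rfl⟩
    exact ⟨-n, by rw [rev_seq, neg_neg]⟩

lemma rev_fEdge (c : Chain x v) (n : ℤ) : fEdge c.rev n = fEdge c (-n - 1) := by
  show (c.seq (-n)).support ∩ (c.seq (-(n+1))).support =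
    (c.seq (-n - 1)).support ∩ (c.seq (-n - 1 + 1)).support
  rw [show (-n - 1 + 1 : ℤ) = -n from by ring, show (-(n+1) : ℤ) = -n - 1 from by ring,
    Set.inter_comm]

lemma fwd (hx : IsTiling x) (c₁ c₂ : Chain x v) (n₁ n₂ : ℤ)
    (ht : c₁.seq n₁ = c₂.seq n₂) (he : fEdge c₁ n₁ = fEdge c₂ n₂) :
    ∀ i : ℕ, c₁.seq (n₁ + i) = c₂.seq (n₂ + i) ∧ fEdge c₁ (n₁ + i) = fEdge c₂ (n₂ + i) := by
  intro i
  induction i with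
  | zero => simpa using ⟨ht, he⟩
  | succ k ih =>
    have hstep := step hx c₁ c₂ (n₁ + k) (n₂ + k) ih.1 ih.2
    constructor
    · rw [show (n₁ + (k+1 : ℕ) : ℤ) = n₁ + k + 1 from by push_cast; ring,
        show (n₂ + (k+1 : ℕ) : ℤ) = n₂ + k + 1 from by push_cast; ring]
      exact hstep.1
    · rw [show (n₁ + (k+1 : ℕ) : ℤ) = n₁ + k + 1 from by push_cast; ring,
        show (n₂ + (k+1 : ℕ) : ℤ) = n₂ + k + 1 from by push_cast; ring]
      exact hstep.2

lemma tiles_eq (hx : IsTiling x) (c₁ c₂ : Chain x v) (n₁ n₂ : ℤ)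
    (ht : c₁.seq n₁ = c₂.seq n₂) (he : fEdge c₁ n₁ = fEdge c₂ n₂) :
    c₁.tiles = c₂.tiles := by
  have hb : fEdge c₁ (n₁ - 1) = fEdge c₂ (n₂ - 1) := by
    obtain ⟨aE, hE, hEmem, _⟩ := fEdge_spec c₁ n₁
    obtain ⟨aF, hF, _, hFmem⟩ := fEdge_spec c₁ (n₁ - 1)
    obtain ⟨aG, hG, _, hGmem⟩ := fEdge_spec c₂ (n₂ - 1)
    rw [show n₁ - 1 + 1 = n₁ from by ring] at hFmem
    rw [show n₂ - 1 + 1 = n₂ from by ring] at hGmem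
    rw [← ht] at hGmem
    have hne1 := fEdge_ne c₁ (n₁ - 1)
    rw [show n₁ - 1 + 1 = n₁ from by ring] at hne1
    have hne2 := fEdge_ne c₂ (n₂ - 1)
    rw [show n₂ - 1 + 1 = n₂ from by ring] at hne2
    have hFne : segment ℝ aF (aF + v) ≠ segment ℝ aE (aE + v) := by
      rw [← hE, ← hF]
      exact hne1
    have hGne : segment ℝ aG (aG + v) ≠ segment ℝ aE (aE + v) := by
      rw [← hE, ← hG, he]
      exact hne2
    have hseg := at_most_two (hx.1 _ (c₁.mem n₁)) hEmem hFmem hGmem rfl rfl rfl hFne hGne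
    rw [hF, hG, hseg]
  have hfwd := fwd hx c₁ c₂ n₁ n₂ ht he
  have htr : c₁.rev.seq (-n₁) = c₂.rev.seq (-n₂) := by
    rw [rev_seq, rev_seq, neg_neg, neg_neg]
    exact ht
  have her : fEdge c₁.rev (-n₁) = fEdge c₂.rev (-n₂) := by
    rw [rev_fEdge, rev_fEdge, show (-(-n₁) - 1 : ℤ) = n₁ - 1 from by ring,
      show (-(-n₂) - 1 : ℤ) = n₂ - 1 from by ring]
    exact hb
  have hbwd := fwd hx c₁.rev c₂.rev (-n₁) (-n₂) htr her
  have hall : ∀ m : ℤ, c₂.seq m = c₁.seq (n₁ + (m - n₂)) := by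
    intro m
    rcases le_or_gt n₂ m with hm | hm
    · have hnn : ((m - n₂).toNat : ℤ) = m - n₂ := Int.toNat_of_nonneg (by linarith)
      have h := (hfwd (m - n₂).toNat).1
      rw [hnn] at h
      rw [show n₂ + (m - n₂) = m from by ring] at h
      exact h.symm
    · have hnn : ((n₂ - m).toNat : ℤ) = n₂ - m := Int.toNat_of_nonneg (by linarith)
      have h := (hbwd (n₂ - m).toNat).1
      rw [hnn, rev_seq, rev_seq] at h
      rw [show -(-n₁ + (n₂ - m)) = n₁ + (m - n₂) from by ring,
        show -(-n₂ + (n₂ - m)) = m from by ring] at h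
      exact h.symm
  ext r
  constructor
  · rintro ⟨m, rfl⟩
    exact ⟨n₂ + (m - n₁), by rw [hall (n₂ + (m - n₁))]; congr 1; ring⟩
  · rintro ⟨m, rfl⟩
    exact ⟨n₁ + (m - n₂), (hall m).symm⟩

end ChainAux

/-- In an edge-to-edge rhombus tiling, two distinct chains with
the same normal vector `v` share no common tile. -/
theorem statement_5 (x : Set Rhombus) (hx : IsTiling x) (v : Pt)
    (c₁ c₂ : Chain x v) (h : c₁.tiles ≠ c₂.tiles) :
    c₁.tiles ∩ c₂.tiles = ∅ := by
  by_contra hne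
  obtain ⟨r, hr1, hr2⟩ := Set.nonempty_iff_ne_empty.2 hne
  obtain ⟨n₁, hn₁⟩ := hr1
  obtain ⟨n₂, hn₂⟩ := hr2
  have ht : c₁.seq n₁ = c₂.seq n₂ := by rw [hn₁, hn₂]
  apply h
  by_cases hcase : fEdge c₁ n₁ = fEdge c₂ n₂
  · exact tiles_eq hx c₁ c₂ n₁ n₂ ht hcase
  · have hcase2 : fEdge c₁ n₁ = fEdge c₂ (n₂ - 1) := by
      by_contra hc2
      obtain ⟨aE, hE, hEmem, _⟩ := fEdge_spec c₁ n₁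
      obtain ⟨aF, hF, hFmem0, _⟩ := fEdge_spec c₂ n₂
      obtain ⟨aG, hG, _, hGmem⟩ := fEdge_spec c₂ (n₂ - 1)
      rw [show n₂ - 1 + 1 = n₂ from by ring] at hGmem
      rw [← ht] at hGmem hFmem0
      have hFne : segment ℝ aF (aF + v) ≠ segment ℝ aE (aE + v) := by
        rw [← hE, ← hF]
        intro hh
        exact hcase hh.symm
      have hGne : segment ℝ aG (aG + v) ≠ segment ℝ aE (aE + v) := by
        rw [← hE, ← hG]
        intro hh
        exact hc2 hh.symm
      have hseg := at_most_two (hx.1 _ (c₁.mem n₁)) hEmem hFmem0 hGmem rfl rfl rfl hFne hGne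
      have hne2 := fEdge_ne c₂ (n₂ - 1)
      rw [show n₂ - 1 + 1 = n₂ from by ring] at hne2
      exact hne2 (by rw [hG, hF]; exact hseg.symm)
    have hres := tiles_eq hx c₁ c₂.rev n₁ (-n₂)
      (by rw [rev_seq, neg_neg]; exact ht)
      (by rw [rev_fEdge, show (-(-n₂) - 1 : ℤ) = n₂ - 1 from by ring]; exact hcase2)
    rw [rev_tiles] at hres
    exact hres
end
end

section
/- Let X be a non-empty subshift of edge-to-edge rhombus tilings on a finite shapeset 𝒯. Then there exists a subset 𝒯' ⊆ 𝒯 such that the restriction ρ_{𝒯'}(X) := X ∩ X_{𝒯'} is non-empty and there exists a shape r ∈ 𝒯' that is uniformly recurrent in every tiling x ∈ ρ_{𝒯'}(X). -/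
open Set Metric

noncomputable section

open Pointwise MeasureTheory Filter

namespace S11

theorem sameShape_refl (r : Rhombus) : r.SameShape r := ⟨rfl, rfl⟩

theorem sameShape_symm {r s : Rhombus} (h : r.SameShape s) : s.SameShape r :=
  ⟨h.1.symm, h.2.symm⟩

theorem sameShape_trans {r s t : Rhombus} (h : r.SameShape s) (h' : s.SameShape t) :
    r.SameShape t := ⟨h.1.trans h'.1, h.2.trans h'.2⟩

theorem translate_sameShape (r : Rhombus) (w : Pt) : (r.translate w).SameShape r := ⟨rfl, rfl⟩

theorem translate_zero (r : Rhombus) : r.translate 0 = r := by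
  cases r; simp [Rhombus.translate]

theorem translatePatch_zero (P : Set Rhombus) : translatePatch P 0 = P := by
  simp [translatePatch, funext translate_zero]

theorem pos_mem_support (r : Rhombus) : r.pos ∈ r.support := by
  exact ⟨0, 0, by norm_num, by norm_num, by simp⟩

theorem support_translate (r : Rhombus) (w : Pt) :
    (r.translate w).support = w +ᵥ r.support := by
  ext y
  constructor
  · rintro ⟨s, t, hs, ht, rfl⟩
    exact ⟨r.pos + s • r.u + t • r.v, ⟨s, t, hs, ht, rfl⟩, by
      simp [Rhombus.translate]; abel⟩
  · rintro ⟨y, ⟨s, t, hs, ht, rfl⟩, rfl⟩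
    exact ⟨s, t, hs, ht, by simp [Rhombus.translate]; abel⟩

theorem dist_le_of_mem_support {r : Rhombus} {p q : Pt}
    (hp : p ∈ r.support) (hq : q ∈ r.support) : dist p q ≤ ‖r.u‖ + ‖r.v‖ := by
  obtain ⟨s, t, hs, ht, rfl⟩ := hp
  obtain ⟨s', t', hs', ht', rfl⟩ := hq
  have : (r.pos + s • r.u + t • r.v) - (r.pos + s' • r.u + t' • r.v)
      = (s - s') • r.u + (t - t') • r.v := by
    rw [sub_smul, sub_smul]; abel
  rw [dist_eq_norm, this]
  have h1 : |s - s'| ≤ 1 := by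
    rw [abs_le]; constructor <;> [linarith [hs.1, hs.2, hs'.1, hs'.2]; linarith [hs.2, hs'.1]]
  have h2 : |t - t'| ≤ 1 := by
    rw [abs_le]; constructor <;> [linarith [ht.1, ht.2, ht'.1, ht'.2]; linarith [ht.2, ht'.1]]
  have k1 : |s - s'| * ‖r.u‖ ≤ 1 * ‖r.u‖ := mul_le_mul_of_nonneg_right h1 (norm_nonneg _)
  have k2 : |t - t'| * ‖r.v‖ ≤ 1 * ‖r.v‖ := mul_le_mul_of_nonneg_right h2 (norm_nonneg _)
  calc ‖(s - s') • r.u + (t - t') • r.v‖ ≤ ‖(s - s') • r.u‖ + ‖(t - t') • r.v‖ :=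
        norm_add_le _ _
    _ = |s - s'| * ‖r.u‖ + |t - t'| * ‖r.v‖ := by rw [norm_smul, norm_smul]; rfl
    _ ≤ ‖r.u‖ + ‖r.v‖ := by linarith

theorem support_eq_vadd (r : Rhombus) :
    r.support = r.pos +ᵥ parallelepiped ![r.u, r.v] := by
  ext y
  constructor
  · rintro ⟨s, t, hs, ht, rfl⟩
    refine ⟨s • r.u + t • r.v, ?_, by simp only [vadd_eq_add]; abel⟩
    refine (mem_parallelepiped_iff _ _).mpr ⟨![s, t], ?_, ?_⟩
    · constructor <;> intro i <;> fin_cases i <;>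
        simp [hs.1, hs.2, ht.1, ht.2]
    · simp [Fin.sum_univ_two]
  · rintro ⟨y, hy, rfl⟩
    obtain ⟨c, hc, rfl⟩ := (mem_parallelepiped_iff _ _).mp hy
    refine ⟨c 0, c 1, ⟨hc.1 0, hc.2 0⟩, ⟨hc.1 1, hc.2 1⟩, ?_⟩
    simp only [vadd_eq_add, Fin.sum_univ_two, Matrix.cons_val_zero, Matrix.cons_val_one,
      Matrix.head_cons]
    abel

theorem volume_support (r : Rhombus) :
    volume r.support = volume (parallelepiped ![r.u, r.v]) := by
  rw [support_eq_vadd, measure_vadd]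

theorem volume_support_pos {r : Rhombus} (h : r.IsValid) : 0 < volume r.support := by
  rw [volume_support]
  have hcard : Fintype.card (Fin 2) = Module.finrank ℝ Pt := by simp
  let b := basisOfLinearIndependentOfCardEqFinrank h.1 hcard
  have hb : parallelepiped ![r.u, r.v] = parallelepiped ⇑b := by
    rw [coe_basisOfLinearIndependentOfCardEqFinrank]
  rw [hb]
  exact MeasureTheory.Measure.measure_pos_of_nonempty_interior _ b.parallelepiped.interior_nonempty

theorem isCompact_support (r : Rhombus) : IsCompact r.support := by
  have : r.support = (fun p : ℝ × ℝ => r.pos + p.1 • r.u + p.2 • r.v) ''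
      (Icc (0:ℝ) 1 ×ˢ Icc (0:ℝ) 1) := by
    ext y
    constructor
    · rintro ⟨s, t, hs, ht, rfl⟩; exact ⟨(s, t), ⟨hs, ht⟩, rfl⟩
    · rintro ⟨⟨s, t⟩, ⟨hs, ht⟩, rfl⟩; exact ⟨s, t, hs, ht, rfl⟩
  rw [this]
  exact ((isCompact_Icc.prod isCompact_Icc).image (by fun_prop))

theorem isClosed_support (r : Rhombus) : IsClosed r.support :=
  (isCompact_support r).isClosed

theorem volume_segment (a b : Pt) : volume (segment ℝ a b) = 0 := by
  have hne : ((ℝ ∙ (b - a)) : Submodule ℝ Pt) ≠ ⊤ := by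
    intro h
    have h3 := finrank_span_le_card (R := ℝ) (M := Pt) ({b - a} : Set Pt)
    rw [h, finrank_top] at h3
    simp at h3
  have hsub : segment ℝ a b ⊆ a +ᵥ (((ℝ ∙ (b - a)) : Submodule ℝ Pt) : Set Pt) := by
    intro x hx
    rw [segment_eq_image'] at hx
    obtain ⟨t, _, rfl⟩ := hx
    exact ⟨t • (b - a), Submodule.smul_mem _ t (Submodule.mem_span_singleton_self _), rfl⟩
  refine measure_mono_null hsub ?_
  rw [measure_vadd]
  exact Measure.addHaar_submodule _ _ hne

theorem volume_inter_eq_zero {r s : Rhombus} (h : EdgeToEdgePair r s) :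
    volume (r.support ∩ s.support) = 0 := by
  rcases h with h | ⟨p, _, _, h⟩ | ⟨e, he, _, h⟩
  · rw [h]; exact measure_empty
  · rw [h]; exact measure_singleton p
  · rw [h]
    obtain ⟨i, rfl⟩ := he
    fin_cases i <;> simp [Rhombus.edge] <;> exact volume_segment _ _

end S11
namespace S11

/-- Vertex offsets of a rhombus. -/
def offs (r : Rhombus) : Set Pt := {0, r.u, r.v, r.u + r.v}

theorem offs_finite (r : Rhombus) : (offs r).Finite := by
  unfold offs
  exact (Set.finite_singleton _).insert _ |>.insert _ |>.insert _

theorem mem_vertices_iff {r : Rhombus} {p : Pt} :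
    p ∈ r.vertices ↔ ∃ a ∈ offs r, p = r.pos + a := by
  unfold Rhombus.vertices offs
  constructor
  · rintro (rfl | rfl | rfl | rfl)
    · exact ⟨0, by simp, by simp⟩
    · exact ⟨r.u, by simp, rfl⟩
    · exact ⟨r.v, by simp, rfl⟩
    · exact ⟨r.u + r.v, by simp, by rw [add_assoc]⟩
  · rintro ⟨a, (rfl | rfl | rfl | rfl), rfl⟩
    · left; simp
    · right; left; rfl
    · right; right; left; rfl
    · right; right; right; rw [add_assoc]; exact Set.mem_singleton _

theorem offs_of_sameShape {r s : Rhombus} (h : r.SameShape s) : offs r = offs s := by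
  unfold offs; rw [h.1, h.2]

theorem edge_endpoints (r : Rhombus) (i : Fin 4) :
    ∃ a b : Pt, r.edge i = segment ℝ a b ∧ a ∈ r.vertices ∧ b ∈ r.vertices := by
  fin_cases i
  · exact ⟨r.pos, r.pos + r.u, rfl, Or.inl rfl, Or.inr (Or.inl rfl)⟩
  · exact ⟨r.pos + r.u, r.pos + r.u + r.v, rfl, Or.inr (Or.inl rfl),
      Or.inr (Or.inr (Or.inr rfl))⟩
  · exact ⟨r.pos + r.u + r.v, r.pos + r.v, rfl,
      Or.inr (Or.inr (Or.inr rfl)), Or.inr (Or.inr (Or.inl rfl))⟩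
  · exact ⟨r.pos + r.v, r.pos, rfl, Or.inr (Or.inr (Or.inl rfl)), Or.inl rfl⟩

/-- If two segments coincide as sets, one endpoint of the second is an endpoint
of the first. -/
theorem segment_eq_endpoint {a b c d : Pt} (h : segment ℝ a b = segment ℝ c d) :
    c = a ∨ c = b := by
  by_cases hab : a = b
  · subst hab
    have : c ∈ segment ℝ a a := h ▸ left_mem_segment ℝ c d
    rw [segment_same] at this
    exact Or.inl this
  · have hc : c ∈ segment ℝ a b := h ▸ left_mem_segment ℝ c d
    have hd : d ∈ segment ℝ a b := h ▸ right_mem_segment ℝ c d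
    have ha : a ∈ segment ℝ c d := h ▸ left_mem_segment ℝ a b
    have hb : b ∈ segment ℝ c d := h ▸ right_mem_segment ℝ a b
    rw [segment_eq_image'] at hc hd ha hb
    obtain ⟨t, ht, hct⟩ := hc
    obtain ⟨t', ht', hdt⟩ := hd
    obtain ⟨s, hs, has⟩ := ha
    obtain ⟨s', hs', hbs⟩ := hb
    dsimp only at hct hdt has hbs
    have ea : (t + s * (t' - t)) • (b - a) = 0 := by
      have step : (t + s * (t' - t)) • (b - a)
          = ((a + t • (b - a)) + s • ((a + t' • (b - a)) - (a + t • (b - a)))) - a := by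
        module
      rw [step, hct, hdt, has]
      simp
    have eb : (t + s' * (t' - t) - 1) • (b - a) = 0 := by
      have step : (t + s' * (t' - t) - 1) • (b - a)
          = ((a + t • (b - a)) + s' • ((a + t' • (b - a)) - (a + t • (b - a)))) - b := by
        module
      rw [step, hct, hdt, hbs]
      simp
    have hba : b - a ≠ 0 := sub_ne_zero.mpr (Ne.symm hab)
    have e1 : t + s * (t' - t) = 0 := by
      rcases smul_eq_zero.mp ea with h' | h'
      · exact h'
      · exact absurd h' hba
    have e2 : t + s' * (t' - t) = 1 := by
      rcases smul_eq_zero.mp eb with h' | h'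
      · linarith
      · exact absurd h' hba
    have e3 : (s' - s) * (t' - t) = 1 := by nlinarith
    have hs0 : s = 0 ∨ s' = 0 := by
      rcases ht with ⟨ht0, ht1⟩; rcases ht' with ⟨ht'0, ht'1⟩
      rcases hs with ⟨hsl, hsu⟩; rcases hs' with ⟨hs'l, hs'u⟩
      by_contra hcon
      push_neg at hcon
      obtain ⟨h1, h2⟩ := hcon
      have hspos : 0 < s := lt_of_le_of_ne hsl (Ne.symm h1)
      have hs'pos : 0 < s' := lt_of_le_of_ne hs'l (Ne.symm h2)
      rcases lt_trichotomy (t' - t) 0 with hq | hq | hq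
      · nlinarith
      · rw [hq, mul_zero] at e3; exact absurd e3.symm one_ne_zero
      · nlinarith
    rcases hs0 with rfl | h
    · left; rw [← has]; simp
    · right; rw [← hbs, h]; simp

end S11
namespace S11

/-! ### Shapeset constants -/

/-- An upper bound on the diameter of any tile using shapes of `Tf`. -/
def Dd (Tf : Finset Rhombus) : ℝ := ∑ s ∈ Tf, (‖s.u‖ + ‖s.v‖)

theorem Dd_nonneg (Tf : Finset Rhombus) : 0 ≤ Dd Tf :=
  Finset.sum_nonneg fun s _ => add_nonneg (norm_nonneg _) (norm_nonneg _)

theorem diam_bound {Tf : Finset Rhombus} {x : Set Rhombus} (hux : UsesShapes ↑Tf x)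
    {t : Rhombus} (ht : t ∈ x) {p q : Pt} (hp : p ∈ t.support) (hq : q ∈ t.support) :
    dist p q ≤ Dd Tf := by
  obtain ⟨s, hs, hss⟩ := hux t ht
  have h1 : dist p q ≤ ‖t.u‖ + ‖t.v‖ := dist_le_of_mem_support hp hq
  rw [hss.1, hss.2] at h1
  refine h1.trans ?_
  exact Finset.single_le_sum (f := fun s => ‖s.u‖ + ‖s.v‖)
    (fun i _ => add_nonneg (norm_nonneg _) (norm_nonneg _)) hs

/-- The minimal area of a shape of `Tf`. -/
def aE (Tf : Finset Rhombus) (h : Tf.Nonempty) : ENNReal :=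
  Tf.inf' h fun s => volume s.support

theorem volume_support_congr {t s : Rhombus} (hss : t.SameShape s) :
    volume t.support = volume s.support := by
  rw [volume_support, volume_support, hss.1, hss.2]

theorem aE_pos {Tf : Finset Rhombus} (h : Tf.Nonempty)
    (hval : ∀ s ∈ (Tf : Set Rhombus), s.IsValid) : 0 < aE Tf h := by
  rw [aE, Finset.lt_inf'_iff]
  exact fun s hs => volume_support_pos (hval s hs)

theorem aE_ne_top {Tf : Finset Rhombus} (h : Tf.Nonempty) : aE Tf h ≠ ⊤ := by
  obtain ⟨s, hs⟩ := h
  refine ne_top_of_le_ne_top ?_ (Finset.inf'_le _ hs)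
  exact ((isCompact_support s).measure_lt_top).ne

theorem aE_le {Tf : Finset Rhombus} (h : Tf.Nonempty) {x : Set Rhombus}
    (hux : UsesShapes ↑Tf x) {t : Rhombus} (ht : t ∈ x) : aE Tf h ≤ volume t.support := by
  obtain ⟨s, hs, hss⟩ := hux t ht
  rw [volume_support_congr hss]
  exact Finset.inf'_le _ hs

/-! ### Local finiteness via areas -/

theorem tiles_near_card_le {Tf : Finset Rhombus} (hTne : Tf.Nonempty)
    (hval : ∀ s ∈ (Tf : Set Rhombus), s.IsValid)
    {x : Set Rhombus} (hx : IsTiling x) (hux : UsesShapes ↑Tf x) (k : ℕ) (N : ℕ)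
    (hN : volume (closedBall (0:Pt) ((k:ℝ) + Dd Tf)) / aE Tf hTne ≤ (N : ENNReal)) :
    {t | t ∈ x ∧ (t.support ∩ closedBall (0:Pt) (k:ℝ)).Nonempty}.Finite ∧
    {t | t ∈ x ∧ (t.support ∩ closedBall (0:Pt) (k:ℝ)).Nonempty}.ncard ≤ N := by
  set W := {t | t ∈ x ∧ (t.support ∩ closedBall (0:Pt) (k:ℝ)).Nonempty} with hW
  have key : ∀ F : Finset Rhombus, ↑F ⊆ W → F.card ≤ N := by
    intro F hF
    have hpair : (↑F : Set Rhombus).Pairwise (Function.onFun (MeasureTheory.AEDisjoint volume)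
        fun t => t.support) := by
      intro a ha b hb hab
      exact volume_inter_eq_zero (hx.2.2 a (hF ha).1 b (hF hb).1 hab)
    have hmeas : ∀ t ∈ F, MeasureTheory.NullMeasurableSet t.support volume := fun t _ =>
      (isClosed_support t).measurableSet.nullMeasurableSet
    have hsum := MeasureTheory.measure_biUnion_finset₀ hpair hmeas
    have hsub : (⋃ t ∈ F, t.support) ⊆ closedBall (0:Pt) ((k:ℝ) + Dd Tf) := by
      intro y hy
      simp only [Set.mem_iUnion] at hy
      obtain ⟨t, htF, hty⟩ := hy
      obtain ⟨q, hq1, hq2⟩ := (hF htF).2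
      have h1 : dist y q ≤ Dd Tf := diam_bound hux (hF htF).1 hty hq1
      have h2 : dist q 0 ≤ (k:ℝ) := mem_closedBall.mp hq2
      rw [mem_closedBall]
      calc dist y 0 ≤ dist y q + dist q 0 := dist_triangle _ _ _
        _ ≤ Dd Tf + (k:ℝ) := add_le_add h1 h2
        _ = (k:ℝ) + Dd Tf := add_comm _ _
    have hle : (F.card : ENNReal) * aE Tf hTne ≤
        volume (closedBall (0:Pt) ((k:ℝ) + Dd Tf)) := by
      calc (F.card : ENNReal) * aE Tf hTne = F.card • aE Tf hTne := by
            rw [nsmul_eq_mul]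
        _ ≤ ∑ t ∈ F, volume t.support :=
            Finset.card_nsmul_le_sum F _ _ (fun t ht => aE_le hTne hux (hF ht).1)
        _ = volume (⋃ t ∈ F, t.support) := hsum.symm
        _ ≤ _ := measure_mono hsub
    have hdiv : (F.card : ENNReal) ≤
        volume (closedBall (0:Pt) ((k:ℝ) + Dd Tf)) / aE Tf hTne := by
      rw [ENNReal.le_div_iff_mul_le (Or.inl (aE_pos hTne hval).ne') (Or.inl (aE_ne_top hTne))]
      exact hle
    exact_mod_cast hdiv.trans hN
  have hWfin : W.Finite := by
    by_contra hinf
    have hinf' : W.Infinite := hinf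
    obtain ⟨F, hFsub, hFcard⟩ := hinf'.exists_subset_card_eq (N + 1)
    have := key F hFsub
    omega
  refine ⟨hWfin, ?_⟩
  have := key hWfin.toFinset (by rw [Set.Finite.coe_toFinset])
  rwa [Set.ncard_eq_toFinset_card _ hWfin]

end S11
namespace S11

theorem exists_common_vertex {t s : Rhombus} (h : EdgeToEdgePair t s)
    (hne : (t.support ∩ s.support).Nonempty) :
    ∃ p, p ∈ t.vertices ∧ p ∈ s.vertices := by
  rcases h with h | ⟨p, hp1, hp2, _⟩ | ⟨e, ⟨i, hei⟩, ⟨j, hej⟩, _⟩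
  · rw [h] at hne; exact absurd hne Set.not_nonempty_empty
  · exact ⟨p, hp1, hp2⟩
  · obtain ⟨a, b, hab, hav, hbv⟩ := edge_endpoints t i
    obtain ⟨c, d, hcd, hcv, hdv⟩ := edge_endpoints s j
    have heq : segment ℝ a b = segment ℝ c d := by
      rw [← hab, ← hcd, hei, hej]
    rcases segment_eq_endpoint heq with h' | h'
    · exact ⟨c, h' ▸ hav, hcv⟩
    · exact ⟨c, h' ▸ hbv, hcv⟩

/-- The finite set of possible relative positions of tiles sharing a vertex. -/
def VTd (Tf : Finset Rhombus) : Set Pt :=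
  ⋃ s₁ ∈ (Tf : Set Rhombus), ⋃ s₂ ∈ (Tf : Set Rhombus),
    (fun ab : Pt × Pt => ab.1 - ab.2) '' ((offs s₁) ×ˢ (offs s₂))

theorem VTd_finite (Tf : Finset Rhombus) : (VTd Tf).Finite :=
  Set.Finite.biUnion Tf.finite_toSet fun s₁ _ =>
    Set.Finite.biUnion Tf.finite_toSet fun s₂ _ =>
      (((offs_finite s₁).prod (offs_finite s₂)).image _)

theorem displacement_mem {Tf : Finset Rhombus} {t s : Rhombus}
    (ht : ∃ s' ∈ (Tf : Set Rhombus), t.SameShape s')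
    (hs : ∃ s' ∈ (Tf : Set Rhombus), s.SameShape s')
    (hpair : EdgeToEdgePair t s) (hmeet : (t.support ∩ s.support).Nonempty) :
    s.pos - t.pos ∈ VTd Tf := by
  obtain ⟨p, hpt, hps⟩ := exists_common_vertex hpair hmeet
  obtain ⟨a, ha, hpa⟩ := mem_vertices_iff.mp hpt
  obtain ⟨b, hb, hpb⟩ := mem_vertices_iff.mp hps
  obtain ⟨s₁, hs₁, hts₁⟩ := ht
  obtain ⟨s₂, hs₂, hss₂⟩ := hs
  rw [offs_of_sameShape hts₁] at ha
  rw [offs_of_sameShape hss₂] at hb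
  have hval : a - b = s.pos - t.pos := by
    have h0 : t.pos + a = s.pos + b := by rw [← hpa, ← hpb]
    exact sub_eq_sub_iff_add_eq_add.mpr (by rw [add_comm a t.pos]; exact h0)
  refine Set.mem_biUnion hs₁ (Set.mem_biUnion hs₂ ⟨(a, b), ⟨ha, hb⟩, hval⟩)

/-- Iterated sum sets of the displacement set. -/
def SumsSet (Tf : Finset Rhombus) : ℕ → Set Pt
  | 0 => {0}
  | n + 1 => SumsSet Tf n ∪
      (fun ab : Pt × Pt => ab.1 + ab.2) '' ((SumsSet Tf n) ×ˢ VTd Tf)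

theorem SumsSet_finite (Tf : Finset Rhombus) : ∀ n, (SumsSet Tf n).Finite
  | 0 => Set.finite_singleton _
  | n + 1 => ((SumsSet_finite Tf n).union
      (((SumsSet_finite Tf n).prod (VTd_finite Tf)).image _))

theorem SumsSet_mono (Tf : Finset Rhombus) : Monotone (SumsSet Tf) := by
  refine monotone_nat_of_le_succ fun n => ?_
  exact Set.subset_union_left

end S11
namespace S11

theorem pattern_pos_mem {Tf : Finset Rhombus} (hTne : Tf.Nonempty)
    (hval : ∀ s ∈ (Tf : Set Rhombus), s.IsValid)
    {x : Set Rhombus} (hx : IsTiling x) (hux : UsesShapes ↑Tf x)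
    {t0 : Rhombus} (ht0 : t0 ∈ x) (hpos : t0.pos = 0) (k N : ℕ)
    (hN : volume (closedBall (0:Pt) ((k:ℝ) + Dd Tf)) / aE Tf hTne ≤ (N : ENNReal)) :
    ∀ t ∈ x, (t.support ∩ closedBall (0:Pt) (k:ℝ)).Nonempty →
      t.pos ∈ SumsSet Tf N := by
  obtain ⟨hWfin, hWcard⟩ := tiles_near_card_le hTne hval hx hux k N hN
  set W := {t | t ∈ x ∧ (t.support ∩ closedBall (0:Pt) (k:ℝ)).Nonempty} with hWdef
  have ht0W : t0 ∈ W := by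
    refine ⟨ht0, ⟨t0.pos, pos_mem_support t0, ?_⟩⟩
    rw [hpos, mem_closedBall, dist_self]
    exact Nat.cast_nonneg k
  set Rset : ℕ → Set Rhombus := fun n => Nat.rec {t0}
    (fun _ A => A ∪ {w | w ∈ W ∧ ∃ a ∈ A, (a.support ∩ w.support).Nonempty}) n with hRdef
  have hRsucc : ∀ n, Rset (n+1) = Rset n ∪
      {w | w ∈ W ∧ ∃ a ∈ Rset n, (a.support ∩ w.support).Nonempty} := fun n => rfl
  have hmono : ∀ n, Rset n ⊆ Rset (n+1) := fun n => by
    rw [hRsucc]; exact Set.subset_union_left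
  have hsubW : ∀ n, Rset n ⊆ W := by
    intro n
    induction n with
    | zero => exact Set.singleton_subset_iff.mpr ht0W
    | succ n ih =>
      rw [hRsucc]
      exact Set.union_subset ih (fun w hw => hw.1)
  have ht0R : ∀ n, t0 ∈ Rset n := by
    intro n
    induction n with
    | zero => exact rfl
    | succ n ih => exact hmono n ih
  have hstab : ∀ n, Rset (n+1) = Rset n → ∀ m, Rset (n+m) = Rset n := by
    intro n h m
    induction m with
    | zero => rfl
    | succ m ih =>
      show Rset ((n+m)+1) = Rset n
      rw [hRsucc, ih, ← hRsucc, h]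
  have hgrow : ∀ n, Rset (n+1) = Rset n ∨ n + 1 ≤ (Rset (n+1)).ncard := by
    intro n
    induction n with
    | zero =>
      right
      have : (Rset 1).Nonempty := ⟨t0, ht0R 1⟩
      have := (Set.ncard_pos (hWfin.subset (hsubW 1))).mpr this
      have h1 : (Rset (0+1)).ncard = (Rset 1).ncard := rfl
      omega
    | succ n ih =>
      rcases ih with hst | hcard
      · left
        have h2 := hstab n hst 2
        have h1 := hstab n hst 1
        rw [show n + 2 = n + 1 + 1 from rfl] at h2
        rw [h2, h1]
      · by_cases he : Rset (n+2) = Rset (n+1)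
        · exact Or.inl he
        · right
          have hss : Rset (n+1) ⊂ Rset (n+2) :=
            HasSubset.Subset.ssubset_of_ne (hmono (n+1)) (fun h => he h.symm)
          have := Set.ncard_lt_ncard hss (hWfin.subset (hsubW (n+2)))
          have heq : (Rset (n+1+1)).ncard = (Rset (n+2)).ncard := rfl
          omega
  have hstable : Rset (W.ncard + 1) = Rset W.ncard := by
    rcases hgrow W.ncard with h | h
    · exact h
    · have := Set.ncard_le_ncard (hsubW (W.ncard + 1)) hWfin
      omega
  have hCclosed : ∀ w ∈ W, (∃ a ∈ Rset W.ncard, (a.support ∩ w.support).Nonempty) →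
      w ∈ Rset W.ncard := by
    intro w hw h
    have : w ∈ Rset (W.ncard + 1) := by
      rw [hRsucc]; exact Or.inr ⟨hw, h⟩
    rwa [hstable] at this
  -- connectivity: every tile of W is reachable
  have hWC : ∀ w ∈ W, w ∈ Rset W.ncard := by
    intro w hw
    by_contra hwC
    set C := Rset W.ncard with hC
    set U1 := ⋃ t ∈ C, Rhombus.support t with hU1
    set U2 := ⋃ t ∈ W \ C, Rhombus.support t with hU2
    have hCfin : C.Finite := hWfin.subset (hsubW _)
    have hU1closed : IsClosed U1 :=
      hCfin.isClosed_biUnion (fun t _ => isClosed_support t)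
    have hU2closed : IsClosed U2 :=
      (hWfin.subset Set.diff_subset).isClosed_biUnion (fun t _ => isClosed_support t)
    have hdisj : U1 ∩ U2 = ∅ := by
      rw [Set.eq_empty_iff_forall_notMem]
      rintro q ⟨hq1, hq2⟩
      obtain ⟨a, ha, hqa⟩ := Set.mem_iUnion₂.mp hq1
      obtain ⟨b, hb, hqb⟩ := Set.mem_iUnion₂.mp hq2
      exact hb.2 (hCclosed b hb.1 ⟨a, ha, ⟨q, hqa, hqb⟩⟩)
    have hcover : closedBall (0:Pt) (k:ℝ) ⊆ U1 ∪ U2 := by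
      intro q hq
      have : q ∈ ⋃ r ∈ x, Rhombus.support r := by
        rw [hx.2.1]; exact Set.mem_univ q
      obtain ⟨t, htx, hqt⟩ := Set.mem_iUnion₂.mp this
      have htW : t ∈ W := ⟨htx, ⟨q, hqt, hq⟩⟩
      by_cases htC : t ∈ C
      · exact Or.inl (Set.mem_biUnion htC hqt)
      · exact Or.inr (Set.mem_biUnion ⟨htW, htC⟩ hqt)
    obtain ⟨qw, hqw1, hqw2⟩ := hw.2
    obtain ⟨q0, hq01, hq02⟩ := ht0W.2
    have hq0C : t0 ∈ C := ht0R _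
    have hpc := (convex_closedBall (0:Pt) (k:ℝ)).isPreconnected
    have happ := hpc U2ᶜ U1ᶜ hU2closed.isOpen_compl hU1closed.isOpen_compl
      (by
        intro q hq
        by_contra hcon
        rw [Set.mem_union] at hcon
        push_neg at hcon
        simp only [Set.mem_compl_iff, not_not] at hcon
        have : q ∈ U1 ∩ U2 := ⟨hcon.2, hcon.1⟩
        rw [hdisj] at this
        exact this)
      ⟨q0, hq02, by
        intro hq0U2
        have : q0 ∈ U1 ∩ U2 := ⟨Set.mem_biUnion hq0C hq01, hq0U2⟩
        rw [hdisj] at this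
        exact this⟩
      ⟨qw, hqw2, by
        intro hqwU1
        have : qw ∈ U1 ∩ U2 := ⟨hqwU1, Set.mem_biUnion ⟨hw, hwC⟩ hqw1⟩
        rw [hdisj] at this
        exact this⟩
    obtain ⟨q, hqball, hqU2c, hqU1c⟩ := happ
    rcases hcover hqball with h | h
    · exact hqU1c h
    · exact hqU2c h
  -- positions of reachable tiles
  have hposn : ∀ n, ∀ w ∈ Rset n, w.pos - t0.pos ∈ SumsSet Tf n := by
    intro n
    induction n with
    | zero =>
      intro w hw
      have : w = t0 := hw
      rw [this, sub_self]
      exact rfl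
    | succ n ih =>
      intro w hw
      rw [hRsucc] at hw
      rcases hw with hw | ⟨hwW, a, haR, hmeet⟩
      · exact SumsSet_mono Tf (Nat.le_succ n) (ih w hw)
      · by_cases haw : a = w
        · subst haw
          exact SumsSet_mono Tf (Nat.le_succ n) (ih a haR)
        · have hpair := hx.2.2 a (hsubW n haR).1 w hwW.1 haw
          have hdisp := displacement_mem (hux a (hsubW n haR).1) (hux w hwW.1) hpair hmeet
          have helem : w.pos - t0.pos = (a.pos - t0.pos) + (w.pos - a.pos) := by abel
          rw [show SumsSet Tf (n+1) = SumsSet Tf n ∪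
            (fun ab : Pt × Pt => ab.1 + ab.2) '' ((SumsSet Tf n) ×ˢ VTd Tf) from rfl]
          exact Or.inr ⟨(a.pos - t0.pos, w.pos - a.pos), ⟨ih a haR, hdisp⟩, helem.symm⟩
  intro t htx hmeet
  have htW : t ∈ W := ⟨htx, hmeet⟩
  have := hposn W.ncard t (hWC t htW)
  rw [hpos, sub_zero] at this
  exact SumsSet_mono Tf hWcard this

end S11
namespace S11

theorem ultrafilter_const {α : Type*} (U : Ultrafilter ℕ) {g : ℕ → α} {S : Set α}
    (hS : S.Finite) (hg : ∀ n, g n ∈ S) : ∃ b, {n | g n = b} ∈ U := by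
  by_contra h
  push_neg at h
  have hcompl : ∀ b, {n | g n = b}ᶜ ∈ U := fun b =>
    (Ultrafilter.compl_mem_iff_notMem).mpr (h b)
  have hint : (⋂ b ∈ S, {n | g n = b}ᶜ) ∈ U :=
    (Filter.biInter_mem hS).mpr fun b _ => hcompl b
  obtain ⟨n, hn⟩ := Filter.nonempty_of_mem hint
  have := Set.mem_iInter₂.mp hn (g n) (hg n)
  exact this rfl

/-- The finite set of possible tiles in an anchored pattern. -/
def PatSet (Tf : Finset Rhombus) (N : ℕ) : Set Rhombus :=
  (fun ps : Pt × Rhombus => ⟨ps.1, ps.2.u, ps.2.v⟩) '' ((SumsSet Tf N) ×ˢ (Tf : Set Rhombus))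

theorem patset_finite (Tf : Finset Rhombus) (N : ℕ) : (PatSet Tf N).Finite :=
  ((SumsSet_finite Tf N).prod Tf.finite_toSet).image _

theorem patset_mem {Tf : Finset Rhombus} {N : ℕ} {t : Rhombus}
    (hp : t.pos ∈ SumsSet Tf N) (hs : ∃ s ∈ (Tf : Set Rhombus), t.SameShape s) :
    t ∈ PatSet Tf N := by
  obtain ⟨s, hsT, hss⟩ := hs
  refine ⟨(t.pos, s), ⟨hp, hsT⟩, ?_⟩
  show (⟨t.pos, s.u, s.v⟩ : Rhombus) = t
  rw [← hss.1, ← hss.2]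

end S11

open S11

/-- Every non-empty subshift `X` on a finite shapeset `T`
admits a subset `T' ⊆ T` such that the restriction of `X` to `T'` is non-empty
and has a shape `r ∈ T'` uniformly recurrent in all of its tilings. -/
theorem statement_11 (T : Set Rhombus) (hTfin : T.Finite)
    (hTval : ∀ s ∈ T, s.IsValid)
    (X : Set (Set Rhombus)) (hsub : IsSubshift T X) (hne : X.Nonempty) :
    ∃ T' : Set Rhombus, T' ⊆ T ∧ (restrictShapes T' X).Nonempty ∧
      ∃ r ∈ T', ∀ x ∈ restrictShapes T' X, UniformlyRecurrentIn r x := by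
  classical
  obtain ⟨x0, hx0⟩ := hne
  set Tf := hTfin.toFinset with hTf
  have hTfcoe : (Tf : Set Rhombus) = T := hTfin.coe_toFinset
  set cands := Tf.powerset.filter (fun F : Finset Rhombus => (restrictShapes (↑F : Set Rhombus) X).Nonempty) with hcands
  have hcand_ne : Tf ∈ cands := by
    rw [hcands, Finset.mem_filter]
    exact ⟨Finset.mem_powerset_self Tf,
      ⟨x0, hx0, by rw [hTfcoe]; exact (hsub.1 x0 hx0).2⟩⟩
  obtain ⟨T'f, hT'mem, hmin⟩ := Finset.exists_min_image cands Finset.card ⟨Tf, hcand_ne⟩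
  rw [hcands, Finset.mem_filter] at hT'mem
  obtain ⟨hT'pow, hT'ne⟩ := hT'mem
  have hT'subTf : T'f ⊆ Tf := Finset.mem_powerset.mp hT'pow
  have hT'subT : (↑T'f : Set Rhombus) ⊆ T := by
    rw [← hTfcoe]
    exact Finset.coe_subset.mpr hT'subTf
  refine ⟨↑T'f, hT'subT, hT'ne, ?_⟩
  -- find a shape r₀ in T'
  obtain ⟨x₁, hx₁⟩ := hT'ne
  have hx₁X : x₁ ∈ X := hx₁.1
  have h0 : (0:Pt) ∈ ⋃ r ∈ x₁, Rhombus.support r := by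
    rw [(hsub.1 _ hx₁X).1.2.1]; trivial
  obtain ⟨t₁, ht₁x, -⟩ := Set.mem_iUnion₂.mp h0
  obtain ⟨r₀, hr₀, -⟩ := hx₁.2 t₁ ht₁x
  have hr₀f : r₀ ∈ T'f := hr₀
  refine ⟨r₀, hr₀, ?_⟩
  intro x hx
  by_contra hnrec
  -- setup
  have hxX : x ∈ X := hx.1
  have hxuseT' : UsesShapes ↑T'f x := hx.2
  have hxtil : IsTiling x := (hsub.1 x hxX).1
  have hT'vald : ∀ s ∈ (T'f : Set Rhombus), s.IsValid := fun s hs => hTval s (hT'subT hs)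
  have hT'fne : T'f.Nonempty := ⟨r₀, hr₀f⟩
  set D := Dd T'f with hD
  have hD0 := Dd_nonneg T'f
  have hNBex : ∀ k : ℕ, ∃ N : ℕ,
      volume (closedBall (0:Pt) ((k:ℝ) + D)) / aE T'f hT'fne ≤ (N : ENNReal) := by
    intro k
    have hvb : volume (closedBall (0:Pt) ((k:ℝ) + D)) < ⊤ := measure_closedBall_lt_top
    obtain ⟨N, hN⟩ := ENNReal.exists_nat_gt
      (ENNReal.div_lt_top hvb.ne (aE_pos hT'fne hT'vald).ne').ne
    exact ⟨N, hN.le⟩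
  choose NB hNB using hNBex
  -- non-recurrence data
  rw [UniformlyRecurrentIn] at hnrec
  push_neg at hnrec
  have hfree : ∀ n : ℕ, ∃ p : Pt, ∀ s ∈ x, s.SameShape r₀ →
      ¬ s.support ⊆ closedBall p ((n:ℝ)+1) := by
    intro n
    exact hnrec ((n:ℝ)+1) (by positivity)
  choose pp hpp using hfree
  have htile : ∀ n : ℕ, ∃ t, t ∈ x ∧ pp n ∈ t.support := by
    intro n
    have : pp n ∈ ⋃ r ∈ x, Rhombus.support r := by
      rw [hxtil.2.1]; trivial
    obtain ⟨t, htx, hmem⟩ := Set.mem_iUnion₂.mp this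
    exact ⟨t, htx, hmem⟩
  choose tt htt hptt using htile
  -- translated tilings
  set y : ℕ → Set Rhombus := fun n => translatePatch x (-(tt n).pos) with hy
  have hyX : ∀ n, y n ∈ X := fun n => hsub.2.1 x hxX _
  have hytil : ∀ n, IsTiling (y n) := fun n => (hsub.1 _ (hyX n)).1
  have hyuse : ∀ n, UsesShapes ↑T'f (y n) := by
    intro n t ht
    obtain ⟨s, hsx, rfl⟩ := ht
    obtain ⟨s', hs', hss⟩ := hxuseT' s hsx
    exact ⟨s', hs', sameShape_trans (translate_sameShape s _) hss⟩
  -- anchors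
  have hanchmem : ∀ n, (tt n).translate (-(tt n).pos) ∈ y n := fun n => ⟨tt n, htt n, rfl⟩
  have hanchpos : ∀ n, ((tt n).translate (-(tt n).pos)).pos = 0 := fun n => add_neg_cancel _
  -- anchored patterns
  set Q : ℕ → ℕ → Set Rhombus :=
    fun n k => {t | t ∈ y n ∧ (t.support ∩ closedBall (0:Pt) (k:ℝ)).Nonempty} with hQ
  have hQsub : ∀ n k, Q n k ⊆ PatSet T'f (NB k) := by
    intro n k t ht
    refine patset_mem ?_ (hyuse n t ht.1)
    exact pattern_pos_mem hT'fne hT'vald (hytil n) (hyuse n) (hanchmem n) (hanchpos n)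
      k (NB k) (hNB k) t ht.1 ht.2
  -- ultrafilter extraction
  set U := Ultrafilter.of (Filter.atTop : Filter ℕ) with hU
  have hUat : ∀ m : ℕ, {n | m ≤ n} ∈ U := fun m =>
    (Ultrafilter.of_le _) (Filter.mem_atTop m)
  have hPk : ∀ k : ℕ, ∃ P : Set Rhombus, {n | Q n k = P} ∈ U := fun k =>
    ultrafilter_const U ((patset_finite T'f (NB k)).finite_subsets) (fun n => hQsub n k)
  choose Pat hPat using hPk
  have hpick : ∀ k m : ℕ, ∃ n, Q n k = Pat k ∧ m ≤ n := by
    intro k m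
    have hmem : ({n | Q n k = Pat k} ∩ {n | m ≤ n}) ∈ U :=
      Filter.inter_mem (hPat k) (hUat m)
    obtain ⟨n, hn1, hn2⟩ := Filter.nonempty_of_mem hmem
    exact ⟨n, hn1, hn2⟩
  have hQmono : ∀ n k, Q n k ⊆ Q n (k+1) := by
    intro n k t ht
    refine ⟨ht.1, ht.2.mono (Set.inter_subset_inter_right _ ?_)⟩
    exact closedBall_subset_closedBall (by exact_mod_cast Nat.le_succ k)
  have hPatmono : Monotone Pat := by
    refine monotone_nat_of_le_succ fun k => ?_
    have hmem : ({n | Q n k = Pat k} ∩ {n | Q n (k+1) = Pat (k+1)}) ∈ U :=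
      Filter.inter_mem (hPat k) (hPat (k+1))
    obtain ⟨n, hn1, hn2⟩ := Filter.nonempty_of_mem hmem
    rw [← hn1, ← hn2]
    exact hQmono n k
  set z := ⋃ k, Pat k with hz
  have hPatsubz : ∀ k, Pat k ⊆ z := fun k => Set.subset_iUnion Pat k
  have hPat_in_y : ∀ k n, Q n k = Pat k → Pat k ⊆ y n := by
    intro k n hn t ht
    rw [← hn] at ht
    exact ht.1
  -- finite subsets of z lie in some Pat k
  have hfin_sub : ∀ P : Set Rhombus, P ⊆ z → P.Finite → ∃ k, P ⊆ Pat k := by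
    intro P hPz hPfin
    have hex : ∀ t : Rhombus, ∃ k, t ∈ P → t ∈ Pat k := by
      intro t
      by_cases ht : t ∈ P
      · obtain ⟨k, hk⟩ := Set.mem_iUnion.mp (hPz ht)
        exact ⟨k, fun _ => hk⟩
      · exact ⟨0, fun h => absurd h ht⟩
    choose κ hκ using hex
    refine ⟨hPfin.toFinset.sup κ, fun t ht => ?_⟩
    have hle : κ t ≤ hPfin.toFinset.sup κ :=
      Finset.le_sup (hPfin.mem_toFinset.mpr ht)
    exact hPatmono hle (hκ t ht)
  -- z is a tiling on T
  have hz_two : ∀ t₂ ∈ z, ∀ s₂ ∈ z, ∃ n, t₂ ∈ y n ∧ s₂ ∈ y n := by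
    intro a ha b hb
    obtain ⟨k1, hk1⟩ := Set.mem_iUnion.mp ha
    obtain ⟨k2, hk2⟩ := Set.mem_iUnion.mp hb
    obtain ⟨n, hn, -⟩ := hpick (max k1 k2) 0
    refine ⟨n, ?_, ?_⟩
    · exact hPat_in_y _ n hn (hPatmono (le_max_left k1 k2) hk1)
    · exact hPat_in_y _ n hn (hPatmono (le_max_right k1 k2) hk2)
  have hztil : IsTilingOn T z := by
    refine ⟨⟨?_, ?_, ?_⟩, ?_⟩
    · intro t ht
      obtain ⟨n, hn, -⟩ := hz_two t ht t ht
      exact (hytil n).1 t hn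
    · rw [Set.eq_univ_iff_forall]
      intro q
      obtain ⟨k, hk⟩ := exists_nat_ge (dist q 0)
      obtain ⟨n, hn, -⟩ := hpick k 0
      have : q ∈ ⋃ r ∈ y n, Rhombus.support r := by
        rw [(hytil n).2.1]; trivial
      obtain ⟨t, hty, hqt⟩ := Set.mem_iUnion₂.mp this
      have htQ : t ∈ Q n k := ⟨hty, ⟨q, hqt, mem_closedBall.mpr hk⟩⟩
      rw [hn] at htQ
      exact Set.mem_iUnion₂.mpr ⟨t, hPatsubz k htQ, hqt⟩
    · intro a ha b hb hab
      obtain ⟨n, hna, hnb⟩ := hz_two a ha b hb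
      exact (hytil n).2.2 a hna b hnb hab
    · intro t ht
      obtain ⟨n, hn, -⟩ := hz_two t ht t ht
      obtain ⟨s', hs', hss⟩ := hyuse n t hn
      exact ⟨s', hT'subT hs', hss⟩
  -- all finite patterns of z appear in X
  have happ : ∀ P, P ⊆ z → P.Finite → P.Nonempty → ∃ yy ∈ X, Appears P yy := by
    intro P h1 h2 _
    obtain ⟨k, hk⟩ := hfin_sub P h1 h2
    obtain ⟨n, hn, -⟩ := hpick k 0
    refine ⟨y n, hyX n, 0, ?_⟩
    rw [translatePatch_zero]
    exact hk.trans (hPat_in_y k n hn)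
  have hzX : z ∈ X := hsub.2.2 z hztil happ
  -- z avoids the shape r₀
  have hz_free : ∀ t ∈ z, ¬ t.SameShape r₀ := by
    intro t ht hshape
    obtain ⟨k, hk⟩ := Set.mem_iUnion.mp ht
    obtain ⟨n, hn, hnk⟩ := hpick k (Nat.ceil ((k:ℝ) + 2*D))
    rw [← hn] at hk
    obtain ⟨⟨s, hsx, rfl⟩, hmeet⟩ := hk
    change ((s.translate (-(tt n).pos)).SameShape r₀) at hshape
    obtain ⟨q', hq'1, hq'2⟩ := hmeet
    change q' ∈ (s.translate (-(tt n).pos)).support at hq'1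
    rw [S11.support_translate] at hq'1
    obtain ⟨q, hq, rfl⟩ := hq'1
    have hd1 : dist q (tt n).pos ≤ (k:ℝ) := by
      have h2 := mem_closedBall.mp hq'2
      have harg : (-(tt n).pos +ᵥ q : Pt) - 0 = q - (tt n).pos := by
        simp only [vadd_eq_add, sub_zero]
        abel
      rw [dist_eq_norm, harg] at h2
      rw [dist_eq_norm]
      exact h2
    have hcast : (k:ℝ) + 2*D ≤ (n:ℝ) :=
      (Nat.le_ceil _).trans (Nat.cast_le.mpr hnk)
    have hsubball : s.support ⊆ closedBall (pp n) ((n:ℝ)+1) := by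
      intro yq hyq
      rw [mem_closedBall]
      have e1 : dist yq q ≤ D := diam_bound hxuseT' hsx hyq hq
      have e2 : dist (tt n).pos (pp n) ≤ D :=
        diam_bound hxuseT' (htt n) (pos_mem_support _) (hptt n)
      calc dist yq (pp n) ≤ dist yq q + dist q (tt n).pos + dist (tt n).pos (pp n) :=
            dist_triangle4 _ _ _ _
        _ ≤ D + (k:ℝ) + D := by gcongr
        _ ≤ (n:ℝ) + 1 := by linarith
    have hshape' : s.SameShape r₀ :=
      sameShape_trans (sameShape_symm (translate_sameShape s _)) hshape
    exact hpp n s hsx hshape' hsubball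
  -- contradiction with minimality
  set T''f := T'f.filter (fun s => ¬ s.SameShape r₀) with hT''
  have hzuse : UsesShapes ↑T''f z := by
    intro t ht
    obtain ⟨n, hn, -⟩ := hz_two t ht t ht
    obtain ⟨s', hs', hss⟩ := hyuse n t hn
    refine ⟨s', ?_, hss⟩
    rw [Finset.mem_coe, hT'', Finset.mem_filter]
    exact ⟨hs', fun hc => hz_free t ht (sameShape_trans hss hc)⟩
  have hT''cand : T''f ∈ cands := by
    rw [hcands, Finset.mem_filter]
    refine ⟨Finset.mem_powerset.mpr ((Finset.filter_subset _ _).trans hT'subTf),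
      ⟨z, hzX, hzuse⟩⟩
  have hr₀notin : r₀ ∉ T''f := by
    rw [hT'', Finset.mem_filter]
    rintro ⟨-, hc⟩
    exact hc (sameShape_refl r₀)
  have hlt : T''f.card < T'f.card := by
    refine Finset.card_lt_card ⟨Finset.filter_subset _ _, fun hc => ?_⟩
    exact hr₀notin (hc hr₀f)
  have := hmin T''f hT''cand
  omega
end
end
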